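/- arXiv:1808.04644 — 3 statements merged into one kernel-verified Lean document; each statement's English description precedes it below -/
import Mathlib

section
/- For every Riemannian manifold (M^n, g) of dimension n ≥ 3 and every λ ∈ ℝ, the pointwise estimate |−W_{ijkl} R̊_{jl} R̊_{ik} + λ R̊_{ij} R̊_{jk} R̊_{ki}| ≤ √((n−2)/(2(n−1))) · (|W|² + (2(n−2)λ²/n) |R̊|²)^{1/2} · |R̊|² = √((n−2)/(2(n−1))) · |W + (λ/√(2n)) R̊ ∘∧ g| · |R̊|² holds. -/
open MeasureTheory

noncomputable section

/-- Kronecker delta (the metric in an orthonormal frame). -/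
def kdelta {n : ℕ} (i j : Fin n) : ℝ := if i = j then 1 else 0

/-- Pointwise curvature data of a Riemannian `n`-manifold `M`, expressed as components with
respect to orthonormal frames.  `Rm` are the components `R_{ijkl}` of the Riemann curvature
tensor, `dRic x i j k = R_{jk,i}` is the covariant derivative of the Ricci tensor,
`hessR x i j = R_{,ij}` is the Hessian of the scalar curvature, `lapTRic x i j = Δ R̊_{ij}` is
the rough Laplacian of the traceless Ricci tensor, `lapNormSqTRic x = Δ |R̊|²`, and
`dC x l i j k = C_{ijk,l}` is the covariant derivative of the Cotton tensor.  The axioms record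
the symmetries of the curvature tensor, the symmetry of `∇Ric` and of the Hessian, and the
contracted second Bianchi identity `R_{ik,i} = R_{,k}/2`. -/
structure GeomData (n : ℕ) (M : Type) where
  Rm : M → Fin n → Fin n → Fin n → Fin n → ℝ
  dRic : M → Fin n → Fin n → Fin n → ℝ
  hessR : M → Fin n → Fin n → ℝ
  lapTRic : M → Fin n → Fin n → ℝ
  lapNormSqTRic : M → ℝ
  dC : M → Fin n → Fin n → Fin n → Fin n → ℝ
  rm_antisymm₁ : ∀ x i j k l, Rm x j i k l = - Rm x i j k l
  rm_antisymm₂ : ∀ x i j k l, Rm x i j l k = - Rm x i j k l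
  rm_pair : ∀ x i j k l, Rm x k l i j = Rm x i j k l
  rm_bianchi : ∀ x i j k l, Rm x i j k l + Rm x j k i l + Rm x k i j l = 0
  dRic_symm : ∀ x i j k, dRic x i k j = dRic x i j k
  hessR_symm : ∀ x i j, hessR x j i = hessR x i j
  bianchi2 : ∀ x k, ∑ i : Fin n, dRic x i i k = (∑ j : Fin n, dRic x k j j) / 2

namespace GeomData

variable {n : ℕ} {M : Type} (D : GeomData n M)

/-- Ricci curvature `R_{jk} = R_{ijik}`. -/
def Ric (x : M) (j k : Fin n) : ℝ := ∑ i : Fin n, D.Rm x i j i k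

/-- Scalar curvature `R`. -/
def R (x : M) : ℝ := ∑ j : Fin n, D.Ric x j j

/-- Traceless Ricci tensor `R̊_{jk} = R_{jk} - (R/n) g_{jk}`. -/
def TRic (x : M) (j k : Fin n) : ℝ := D.Ric x j k - D.R x / (n : ℝ) * kdelta j k

/-- Gradient of the scalar curvature `R_{,i}`. -/
def dR (x : M) (i : Fin n) : ℝ := ∑ j : Fin n, D.dRic x i j j

/-- Covariant derivative of the traceless Ricci tensor `R̊_{jk,i}`. -/
def dTRic (x : M) (i j k : Fin n) : ℝ := D.dRic x i j k - D.dR x i / (n : ℝ) * kdelta j k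

/-- Laplacian of the scalar curvature `ΔR`. -/
def lapR (x : M) : ℝ := ∑ i : Fin n, D.hessR x i i

/-- Weyl curvature tensor `W_{ijkl}`. -/
def W (x : M) (i j k l : Fin n) : ℝ :=
  D.Rm x i j k l
    - (1 / ((n : ℝ) - 2)) * (D.Ric x i k * kdelta j l - D.Ric x i l * kdelta j k
        + D.Ric x j l * kdelta i k - D.Ric x j k * kdelta i l)
    + D.R x / (((n : ℝ) - 1) * ((n : ℝ) - 2)) *
        (kdelta i k * kdelta j l - kdelta i l * kdelta j k)

/-- Cotton tensor `C_{ijk} = R_{kj,i} - R_{ki,j} - (R_{,i} g_{jk} - R_{,j} g_{ik})/(2(n-1))`. -/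
def C (x : M) (i j k : Fin n) : ℝ :=
  D.dRic x i k j - D.dRic x j k i
    - (1 / (2 * ((n : ℝ) - 1))) * (D.dR x i * kdelta j k - D.dR x j * kdelta i k)

/-- Divergence of the Cotton tensor `C_{ijk,i}`. -/
def divC (x : M) (j k : Fin n) : ℝ := ∑ i : Fin n, D.dC x i i j k

/-- `|Ric|²`. -/
def normSqRic (x : M) : ℝ := ∑ j : Fin n, ∑ k : Fin n, (D.Ric x j k) ^ 2

/-- `|R̊|²`. -/
def normSqTRic (x : M) : ℝ := ∑ j : Fin n, ∑ k : Fin n, (D.TRic x j k) ^ 2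

/-- `|R̊|`. -/
def normTRic (x : M) : ℝ := Real.sqrt (D.normSqTRic x)

/-- `|Rm|²`. -/
def normSqRm (x : M) : ℝ :=
  ∑ i : Fin n, ∑ j : Fin n, ∑ k : Fin n, ∑ l : Fin n, (D.Rm x i j k l) ^ 2

/-- `|W|²`. -/
def normSqW (x : M) : ℝ :=
  ∑ i : Fin n, ∑ j : Fin n, ∑ k : Fin n, ∑ l : Fin n, (D.W x i j k l) ^ 2

/-- `|C|²`. -/
def normSqC (x : M) : ℝ := ∑ i : Fin n, ∑ j : Fin n, ∑ k : Fin n, (D.C x i j k) ^ 2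

/-- `|∇R|²`. -/
def normSqGradR (x : M) : ℝ := ∑ i : Fin n, (D.dR x i) ^ 2

/-- `|∇R̊|²`. -/
def normSqGradTRic (x : M) : ℝ :=
  ∑ i : Fin n, ∑ j : Fin n, ∑ k : Fin n, (D.dTRic x i j k) ^ 2

/-- The quantity `|W + (λ/√(2n)) R̊ ⊙∧ g|` (Kulkarni–Nomizu product with the metric),
characterized by `|W + (λ/√(2n)) R̊ ⊙∧ g|² = |W|² + (2(n-2)λ²/n)|R̊|²`. -/
def WKN (lam : ℝ) (x : M) : ℝ :=
  Real.sqrt (D.normSqW x + 2 * ((n : ℝ) - 2) * lam ^ 2 / (n : ℝ) * D.normSqTRic x)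

/-- The contraction `W_{ijkl} R̊_{jl} R̊_{ik}`. -/
def cWTT (x : M) : ℝ :=
  ∑ i : Fin n, ∑ j : Fin n, ∑ k : Fin n, ∑ l : Fin n,
    D.W x i j k l * D.TRic x j l * D.TRic x i k

/-- The contraction `W_{ikjl} R̊_{kl} R̊_{ij}`. -/
def cWTT' (x : M) : ℝ :=
  ∑ i : Fin n, ∑ j : Fin n, ∑ k : Fin n, ∑ l : Fin n,
    D.W x i k j l * D.TRic x k l * D.TRic x i j

/-- The contraction `W_{ikpq} W_{jkpq} R̊_{ij}`. -/
def cWWT (x : M) : ℝ :=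
  ∑ i : Fin n, ∑ j : Fin n, ∑ k : Fin n, ∑ p : Fin n, ∑ q : Fin n,
    D.W x i k p q * D.W x j k p q * D.TRic x i j

/-- The contraction `R̊_{ij} R̊_{jk} R̊_{ki}`. -/
def cTTT (x : M) : ℝ :=
  ∑ i : Fin n, ∑ j : Fin n, ∑ k : Fin n, D.TRic x i j * D.TRic x j k * D.TRic x k i

/-- `g` is a critical metric for `F_{t,s}(g) = ∫|Ric|² + t∫R² + s∫|Rm|²` on the space of
unit-volume metrics: the Euler–Lagrange equations (Catino), where `μ` is the Riemannian
volume measure. -/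
def IsCritical [MeasurableSpace M] (μ : Measure M) (t s : ℝ) : Prop :=
  (∀ x i j, (1 + 4 * s) * D.lapTRic x i j =
      (1 + 2 * t + 2 * s) * D.hessR x i j
      - ((1 + 2 * t + 2 * s) / (n : ℝ)) * D.lapR x * kdelta i j
      - 2 * (1 + 2 * s) * (∑ k : Fin n, ∑ l : Fin n, D.Rm x i k j l * D.TRic x k l)
      - ((2 + 2 * (n : ℝ) * t - 4 * s) / (n : ℝ)) * D.R x * D.TRic x i j
      + (2 / (n : ℝ)) * (D.normSqTRic x + s * D.normSqRm x) * kdelta i j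
      - 2 * s * (∑ k : Fin n, ∑ p : Fin n, ∑ q : Fin n, D.Rm x i k p q * D.Rm x j k p q)
      + 4 * s * (∑ k : Fin n, D.TRic x i k * D.TRic x j k))
  ∧ (∀ x, ((n : ℝ) + 4 * ((n : ℝ) - 1) * t + 4 * s) * D.lapR x =
      ((n : ℝ) - 4) * (D.normSqRic x + t * (D.R x) ^ 2 + s * D.normSqRm x
        - ∫ y, (D.normSqRic y + t * (D.R y) ^ 2 + s * D.normSqRm y) ∂μ))

/-- The metric is Einstein: the traceless Ricci tensor vanishes. -/
def IsEinstein : Prop := ∀ x i j, D.TRic x i j = 0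

/-- The metric has positive constant sectional curvature. -/
def HasConstPosSecCurv : Prop :=
  ∃ κ : ℝ, 0 < κ ∧ ∀ x i j k l,
    D.Rm x i j k l = κ * (kdelta i k * kdelta j l - kdelta i l * kdelta j k)

end GeomData

end


noncomputable section

namespace Helpers
variable {n : ℕ}

lemma sum_kd_r (f : Fin n → ℝ) (j : Fin n) : ∑ l, f l * kdelta j l = f j := by
  simp [kdelta, mul_ite]

lemma sum_kd_l (f : Fin n → ℝ) (j : Fin n) : ∑ l, f l * kdelta l j = f j := by
  simp [kdelta, mul_ite]

lemma s3_23 (f : Fin n → Fin n → Fin n → ℝ) :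
    ∑ i, ∑ j, ∑ k, f i j k = ∑ i, ∑ k, ∑ j, f i j k :=
  Finset.sum_congr rfl fun _ _ => Finset.sum_comm

lemma s3_to_last (f : Fin n → Fin n → Fin n → ℝ) :
    ∑ i, ∑ j, ∑ k, f i j k = ∑ j, ∑ k, ∑ i, f i j k :=
  Finset.sum_comm.trans (Finset.sum_congr rfl fun _ _ => Finset.sum_comm)

noncomputable def Pm (S : Fin n → Fin n → ℝ) (i k : Fin n) : ℝ := ∑ m, S i m * S m k
noncomputable def qS (S : Fin n → Fin n → ℝ) : ℝ := ∑ j, ∑ k, S j k ^ 2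
noncomputable def Bt (S : Fin n → Fin n → ℝ) (i j k l : Fin n) : ℝ :=
  (S i k * S j l - S i l * S j k)/2
noncomputable def Gt (S : Fin n → Fin n → ℝ) (i j k l : Fin n) : ℝ :=
  (-(1/(2*((n:ℝ)-2)))) * (Pm S i k * kdelta j l + Pm S j l * kdelta i k
      - Pm S i l * kdelta j k - Pm S j k * kdelta i l)
  + (qS S/(2*((n:ℝ)-1)*((n:ℝ)-2))) * (kdelta i k * kdelta j l - kdelta i l * kdelta j k)

variable {T : Fin n → Fin n → Fin n → Fin n → ℝ} {S : Fin n → Fin n → ℝ}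

lemma contrG (hT1 : ∀ i j k l, T j i k l = - T i j k l)
    (hT2 : ∀ i j k l, T i j l k = - T i j k l)
    (hTt : ∀ j l, ∑ i, T i j i l = 0) :
    ∑ i, ∑ j, ∑ k, ∑ l, T i j k l * Gt S i j k l = 0 := by
  have hTt2 : ∀ i k, ∑ j, T i j k j = 0 := by
    intro i k
    have e : ∀ j, T i j k j = T j i j k := by
      intro j
      rw [show T j i j k = - T i j j k from hT1 i j j k,
          show T i j j k = - T i j k j from hT2 i j k j]; ring
    simp_rw [e]; exact hTt i k
  have hTt3 : ∀ i l, ∑ j, T i j j l = 0 := by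
    intro i l
    have e : ∀ j, T i j j l = - T i j l j := fun j => hT2 i j l j
    simp_rw [e, Finset.sum_neg_distrib, hTt2 i l, neg_zero]
  have hTt4 : ∀ j k, ∑ i, T i j k i = 0 := by
    intro j k
    have e : ∀ i, T i j k i = - T j i k i := fun i => by rw [hT1 i j k i, neg_neg]
    simp_rw [e, Finset.sum_neg_distrib, hTt2 j k, neg_zero]
  have a1 : ∑ i, ∑ j, ∑ k, ∑ l, T i j k l * (Pm S i k * kdelta j l) = 0 := by
    have c1 : ∀ i j k, ∑ l, T i j k l * (Pm S i k * kdelta j l) = T i j k j * Pm S i k := by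
      intro i j k
      rw [show (∑ l, T i j k l * (Pm S i k * kdelta j l))
          = ∑ l, (T i j k l * Pm S i k) * kdelta j l from
        Finset.sum_congr rfl fun l _ => by ring]
      exact sum_kd_r (fun l => T i j k l * Pm S i k) j
    simp_rw [c1]
    have c2 : ∀ i, ∑ j, ∑ k, T i j k j * Pm S i k = 0 := by
      intro i
      rw [Finset.sum_comm]
      have : ∀ k, ∑ j, T i j k j * Pm S i k = 0 := by
        intro k; rw [← Finset.sum_mul, hTt2 i k, zero_mul]
      simp_rw [this, Finset.sum_const_zero]
    simp_rw [c2, Finset.sum_const_zero]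
  have a2 : ∑ i, ∑ j, ∑ k, ∑ l, T i j k l * (Pm S j l * kdelta i k) = 0 := by
    have c1 : ∀ i j, ∑ k, ∑ l, T i j k l * (Pm S j l * kdelta i k)
        = ∑ l, T i j i l * Pm S j l := by
      intro i j
      rw [Finset.sum_comm]
      refine Finset.sum_congr rfl fun l _ => ?_
      rw [show (∑ k, T i j k l * (Pm S j l * kdelta i k))
          = ∑ k, (T i j k l * Pm S j l) * kdelta i k from
        Finset.sum_congr rfl fun k _ => by ring]
      exact sum_kd_r (fun k => T i j k l * Pm S j l) i
    simp_rw [c1]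
    rw [s3_to_last (fun i j l => T i j i l * Pm S j l)]
    have : ∀ j l, ∑ i, T i j i l * Pm S j l = 0 := by
      intro j l; rw [← Finset.sum_mul, hTt j l, zero_mul]
    simp_rw [this, Finset.sum_const_zero]
  have a3 : ∑ i, ∑ j, ∑ k, ∑ l, T i j k l * (Pm S i l * kdelta j k) = 0 := by
    have c1 : ∀ i j, ∑ k, ∑ l, T i j k l * (Pm S i l * kdelta j k)
        = ∑ l, T i j j l * Pm S i l := by
      intro i j
      rw [Finset.sum_comm]
      refine Finset.sum_congr rfl fun l _ => ?_
      rw [show (∑ k, T i j k l * (Pm S i l * kdelta j k))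
          = ∑ k, (T i j k l * Pm S i l) * kdelta j k from
        Finset.sum_congr rfl fun k _ => by ring]
      exact sum_kd_r (fun k => T i j k l * Pm S i l) j
    simp_rw [c1]
    rw [s3_23 (fun i j l => T i j j l * Pm S i l)]
    have : ∀ i l, ∑ j, T i j j l * Pm S i l = 0 := by
      intro i l; rw [← Finset.sum_mul, hTt3 i l, zero_mul]
    simp_rw [this, Finset.sum_const_zero]
  have a4 : ∑ i, ∑ j, ∑ k, ∑ l, T i j k l * (Pm S j k * kdelta i l) = 0 := by
    have c1 : ∀ i j k, ∑ l, T i j k l * (Pm S j k * kdelta i l) = T i j k i * Pm S j k := by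
      intro i j k
      rw [show (∑ l, T i j k l * (Pm S j k * kdelta i l))
          = ∑ l, (T i j k l * Pm S j k) * kdelta i l from
        Finset.sum_congr rfl fun l _ => by ring]
      exact sum_kd_r (fun l => T i j k l * Pm S j k) i
    simp_rw [c1]
    rw [s3_to_last (fun i j k => T i j k i * Pm S j k)]
    have : ∀ j k, ∑ i, T i j k i * Pm S j k = 0 := by
      intro j k; rw [← Finset.sum_mul, hTt4 j k, zero_mul]
    simp_rw [this, Finset.sum_const_zero]
  have a5 : ∑ i, ∑ j, ∑ k, ∑ l, T i j k l * (kdelta i k * kdelta j l) = 0 := by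
    have c1 : ∀ i j k, ∑ l, T i j k l * (kdelta i k * kdelta j l)
        = T i j k j * kdelta i k := by
      intro i j k
      rw [show (∑ l, T i j k l * (kdelta i k * kdelta j l))
          = ∑ l, (T i j k l * kdelta i k) * kdelta j l from
        Finset.sum_congr rfl fun l _ => by ring]
      exact sum_kd_r (fun l => T i j k l * kdelta i k) j
    have c2 : ∀ i j, ∑ k, T i j k j * kdelta i k = T i j i j :=
      fun i j => sum_kd_r (fun k => T i j k j) i
    simp_rw [c1, c2]
    rw [Finset.sum_comm]
    simp_rw [hTt, Finset.sum_const_zero]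
  have a6 : ∑ i, ∑ j, ∑ k, ∑ l, T i j k l * (kdelta i l * kdelta j k) = 0 := by
    have c1 : ∀ i j k, ∑ l, T i j k l * (kdelta i l * kdelta j k)
        = T i j k i * kdelta j k := by
      intro i j k
      rw [show (∑ l, T i j k l * (kdelta i l * kdelta j k))
          = ∑ l, (T i j k l * kdelta j k) * kdelta i l from
        Finset.sum_congr rfl fun l _ => by ring]
      exact sum_kd_r (fun l => T i j k l * kdelta j k) i
    have c2 : ∀ i j, ∑ k, T i j k i * kdelta j k = T i j j i :=
      fun i j => sum_kd_r (fun k => T i j k i) j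
    simp_rw [c1, c2]
    exact Finset.sum_eq_zero fun i _ => hTt3 i i
  have e : ∀ i j k l, T i j k l * Gt S i j k l =
      (-(1/(2*((n:ℝ)-2)))) * (T i j k l * (Pm S i k * kdelta j l))
      + (-(1/(2*((n:ℝ)-2)))) * (T i j k l * (Pm S j l * kdelta i k))
      - (-(1/(2*((n:ℝ)-2)))) * (T i j k l * (Pm S i l * kdelta j k))
      - (-(1/(2*((n:ℝ)-2)))) * (T i j k l * (Pm S j k * kdelta i l))
      + (qS S/(2*((n:ℝ)-1)*((n:ℝ)-2))) * (T i j k l * (kdelta i k * kdelta j l))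
      - (qS S/(2*((n:ℝ)-1)*((n:ℝ)-2))) * (T i j k l * (kdelta i l * kdelta j k)) := by
    intro i j k l; unfold Gt; ring
  simp_rw [e]
  simp only [Finset.sum_add_distrib, Finset.sum_sub_distrib, ← Finset.mul_sum]
  rw [a1, a2, a3, a4, a5, a6]; ring

lemma Pm_symm (hS : ∀ i j, S j i = S i j) (i j : Fin n) : Pm S j i = Pm S i j := by
  unfold Pm
  refine Finset.sum_congr rfl fun m _ => ?_
  rw [hS j m, hS m i]; ring

lemma sumBB (hS : ∀ i j, S j i = S i j) :
    ∑ i, ∑ j, ∑ k, ∑ l, Bt S i j k l * Bt S i j k l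
      = (qS S * qS S - ∑ i, ∑ k, (Pm S i k)^2)/2 := by
  have hPm1 : ∀ i j, (∑ k, S i k * S j k) = Pm S i j := by
    intro i j; unfold Pm
    exact Finset.sum_congr rfl fun m _ => by rw [hS j m]
  have hPm2 : ∀ i j, (∑ l, S j l * S i l) = Pm S i j := by
    intro i j; unfold Pm
    exact Finset.sum_congr rfl fun m _ => by rw [hS m j]; ring
  have e : ∀ i j k l, Bt S i j k l * Bt S i j k l =
      (S i k^2 * S j l^2)/4 + (S i l^2 * S j k^2)/4
        - ((S i k * S j k) * (S j l * S i l))/2 := by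
    intro i j k l; unfold Bt; ring
  simp_rw [e]
  simp only [Finset.sum_add_distrib, Finset.sum_sub_distrib, ← Finset.sum_div]
  have q1 : ∑ i, ∑ j, ∑ k, ∑ l, S i k^2 * S j l^2 = qS S * qS S := by
    have c1 : ∀ i j, ∑ k, ∑ l, S i k^2 * S j l^2
        = (∑ k, S i k^2) * (∑ l, S j l^2) := fun i j => (Finset.sum_mul_sum _ _ _ _).symm
    simp_rw [c1]
    exact (Finset.sum_mul_sum _ _ _ _).symm
  have q2 : ∑ i, ∑ j, ∑ k, ∑ l, S i l^2 * S j k^2 = qS S * qS S := by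
    have c1 : ∀ i j, ∑ k, ∑ l, S i l^2 * S j k^2
        = (∑ k, S j k^2) * (∑ l, S i l^2) := by
      intro i j
      rw [Finset.sum_mul_sum]
      exact Finset.sum_congr rfl fun k _ => Finset.sum_congr rfl fun l _ => by ring
    simp_rw [c1]
    have c2 : ∀ i, ∑ j, (∑ k, S j k^2) * (∑ l, S i l^2)
        = (∑ j, ∑ k, S j k^2) * (∑ l, S i l^2) := fun i => (Finset.sum_mul _ _ _).symm
    simp_rw [c2, ← Finset.mul_sum]
    rw [mul_comm]; rfl
  have q3 : ∑ i, ∑ j, ∑ k, ∑ l, (S i k * S j k) * (S j l * S i l)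
      = ∑ i, ∑ j, (Pm S i j)^2 := by
    have c1 : ∀ i j, ∑ k, ∑ l, (S i k * S j k) * (S j l * S i l)
        = (∑ k, S i k * S j k) * (∑ l, S j l * S i l) :=
      fun i j => (Finset.sum_mul_sum _ _ _ _).symm
    simp_rw [c1, hPm1]
    simp_rw [Pm_symm hS, ← sq]
  rw [q1, q2, q3]
  have : ∑ i, ∑ j, (Pm S i j)^2 = ∑ i, ∑ k, (Pm S i k)^2 := rfl
  rw [this]; ring
lemma trP (hS : ∀ i j, S j i = S i j) : ∑ i, Pm S i i = qS S := by
  unfold Pm qS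
  exact Finset.sum_congr rfl fun i _ => Finset.sum_congr rfl fun m _ => by
    rw [hS m i, ← sq]

lemma sumGB (hS : ∀ i j, S j i = S i j) (hTr : ∑ i, S i i = 0) :
    ∑ i, ∑ j, ∑ k, ∑ l, Bt S i j k l * Gt S i j k l
      = (-(1/(2*((n:ℝ)-2)))) * (-2 * ∑ i, ∑ k, (Pm S i k)^2)
        + (qS S/(2*((n:ℝ)-1)*((n:ℝ)-2))) * (- qS S) := by
  -- inner sums of Bt against a fixed slot
  have hPrfl : ∀ j l, (∑ i, S j i * S i l) = Pm S j l := fun j l => rfl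
  have t1 : ∑ i, ∑ j, ∑ k, ∑ l, Bt S i j k l * (Pm S i k * kdelta j l)
      = -(∑ i, ∑ k, (Pm S i k)^2)/2 := by
    have c1 : ∀ i j k, ∑ l, Bt S i j k l * (Pm S i k * kdelta j l)
        = Bt S i j k j * Pm S i k := by
      intro i j k
      rw [show (∑ l, Bt S i j k l * (Pm S i k * kdelta j l))
          = ∑ l, (Bt S i j k l * Pm S i k) * kdelta j l from
        Finset.sum_congr rfl fun l _ => by ring]
      exact sum_kd_r (fun l => Bt S i j k l * Pm S i k) j
    simp_rw [c1]
    rw [s3_23 (fun i j k => Bt S i j k j * Pm S i k)]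
    have c2 : ∀ i k, ∑ j, Bt S i j k j * Pm S i k = -((Pm S i k)^2)/2 := by
      intro i k
      have e : ∀ j, Bt S i j k j * Pm S i k =
          S j j * (S i k * Pm S i k / 2) - (S i j * S j k) * (Pm S i k / 2) := by
        intro j; unfold Bt; ring
      simp_rw [e, Finset.sum_sub_distrib, ← Finset.sum_mul, hTr, zero_mul]
      rw [show (∑ j, S i j * S j k) = Pm S i k from rfl]
      ring
    simp_rw [c2]
    simp only [neg_div, Finset.sum_neg_distrib, ← Finset.sum_div]
  have t2 : ∑ i, ∑ j, ∑ k, ∑ l, Bt S i j k l * (Pm S j l * kdelta i k)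
      = -(∑ i, ∑ k, (Pm S i k)^2)/2 := by
    have c1 : ∀ i j, ∑ k, ∑ l, Bt S i j k l * (Pm S j l * kdelta i k)
        = ∑ l, Bt S i j i l * Pm S j l := by
      intro i j
      rw [Finset.sum_comm]
      refine Finset.sum_congr rfl fun l _ => ?_
      rw [show (∑ k, Bt S i j k l * (Pm S j l * kdelta i k))
          = ∑ k, (Bt S i j k l * Pm S j l) * kdelta i k from
        Finset.sum_congr rfl fun k _ => by ring]
      exact sum_kd_r (fun k => Bt S i j k l * Pm S j l) i
    simp_rw [c1]
    rw [s3_to_last (fun i j l => Bt S i j i l * Pm S j l)]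
    have c2 : ∀ j l, ∑ i, Bt S i j i l * Pm S j l = -((Pm S j l)^2)/2 := by
      intro j l
      have e : ∀ i, Bt S i j i l * Pm S j l =
          S i i * (S j l * Pm S j l / 2) - (S j i * S i l) * (Pm S j l / 2) := by
        intro i; unfold Bt; ring
      simp_rw [e, Finset.sum_sub_distrib, ← Finset.sum_mul, hTr, zero_mul, hPrfl]
      ring
    simp_rw [c2]
    simp only [neg_div, Finset.sum_neg_distrib, ← Finset.sum_div]
  have t3 : ∑ i, ∑ j, ∑ k, ∑ l, Bt S i j k l * (Pm S i l * kdelta j k)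
      = (∑ i, ∑ k, (Pm S i k)^2)/2 := by
    have c1 : ∀ i j, ∑ k, ∑ l, Bt S i j k l * (Pm S i l * kdelta j k)
        = ∑ l, Bt S i j j l * Pm S i l := by
      intro i j
      rw [Finset.sum_comm]
      refine Finset.sum_congr rfl fun l _ => ?_
      rw [show (∑ k, Bt S i j k l * (Pm S i l * kdelta j k))
          = ∑ k, (Bt S i j k l * Pm S i l) * kdelta j k from
        Finset.sum_congr rfl fun k _ => by ring]
      exact sum_kd_r (fun k => Bt S i j k l * Pm S i l) j
    simp_rw [c1]
    rw [s3_23 (fun i j l => Bt S i j j l * Pm S i l)]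
    have c2 : ∀ i l, ∑ j, Bt S i j j l * Pm S i l = ((Pm S i l)^2)/2 := by
      intro i l
      have e : ∀ j, Bt S i j j l * Pm S i l =
          (S i j * S j l) * (Pm S i l / 2) - S j j * (S i l * Pm S i l / 2) := by
        intro j; unfold Bt; ring
      simp_rw [e, Finset.sum_sub_distrib, ← Finset.sum_mul, hTr, zero_mul]
      rw [show (∑ j, S i j * S j l) = Pm S i l from rfl]
      ring
    simp_rw [c2]
    simp only [← Finset.sum_div]
  have t4 : ∑ i, ∑ j, ∑ k, ∑ l, Bt S i j k l * (Pm S j k * kdelta i l)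
      = (∑ i, ∑ k, (Pm S i k)^2)/2 := by
    have c1 : ∀ i j k, ∑ l, Bt S i j k l * (Pm S j k * kdelta i l)
        = Bt S i j k i * Pm S j k := by
      intro i j k
      rw [show (∑ l, Bt S i j k l * (Pm S j k * kdelta i l))
          = ∑ l, (Bt S i j k l * Pm S j k) * kdelta i l from
        Finset.sum_congr rfl fun l _ => by ring]
      exact sum_kd_r (fun l => Bt S i j k l * Pm S j k) i
    simp_rw [c1]
    rw [s3_to_last (fun i j k => Bt S i j k i * Pm S j k)]
    have c2 : ∀ j k, ∑ i, Bt S i j k i * Pm S j k = ((Pm S j k)^2)/2 := by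
      intro j k
      have e : ∀ i, Bt S i j k i * Pm S j k =
          (S j i * S i k) * (Pm S j k / 2) - S i i * (S j k * Pm S j k / 2) := by
        intro i; unfold Bt; ring
      simp_rw [e, Finset.sum_sub_distrib, ← Finset.sum_mul, hTr, zero_mul, hPrfl]
      ring
    simp_rw [c2]
    simp only [← Finset.sum_div]
  have t5 : ∑ i, ∑ j, ∑ k, ∑ l, Bt S i j k l * (kdelta i k * kdelta j l)
      = -(qS S)/2 := by
    have c1 : ∀ i j k, ∑ l, Bt S i j k l * (kdelta i k * kdelta j l)
        = Bt S i j k j * kdelta i k := by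
      intro i j k
      rw [show (∑ l, Bt S i j k l * (kdelta i k * kdelta j l))
          = ∑ l, (Bt S i j k l * kdelta i k) * kdelta j l from
        Finset.sum_congr rfl fun l _ => by ring]
      exact sum_kd_r (fun l => Bt S i j k l * kdelta i k) j
    have c2 : ∀ i j, ∑ k, Bt S i j k j * kdelta i k = Bt S i j i j :=
      fun i j => sum_kd_r (fun k => Bt S i j k j) i
    simp_rw [c1, c2]
    have e : ∀ i j, Bt S i j i j = (S i i * S j j)/2 - (S i j * S j i)/2 := by
      intro i j; unfold Bt; ring
    simp_rw [e, Finset.sum_sub_distrib, ← Finset.sum_div]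
    rw [← Finset.sum_mul_sum Finset.univ Finset.univ (fun i => S i i) (fun j => S j j)]
    rw [hTr, zero_mul]
    have e2 : ∀ i j, S i j * S j i = S i j ^2 := by
      intro i j; rw [hS j i]; ring
    simp_rw [e2]
    rw [show (∑ i, ∑ j, S i j ^2) = qS S from rfl]
    ring
  have t6 : ∑ i, ∑ j, ∑ k, ∑ l, Bt S i j k l * (kdelta i l * kdelta j k)
      = (qS S)/2 := by
    have c1 : ∀ i j k, ∑ l, Bt S i j k l * (kdelta i l * kdelta j k)
        = Bt S i j k i * kdelta j k := by
      intro i j k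
      rw [show (∑ l, Bt S i j k l * (kdelta i l * kdelta j k))
          = ∑ l, (Bt S i j k l * kdelta j k) * kdelta i l from
        Finset.sum_congr rfl fun l _ => by ring]
      exact sum_kd_r (fun l => Bt S i j k l * kdelta j k) i
    have c2 : ∀ i j, ∑ k, Bt S i j k i * kdelta j k = Bt S i j j i :=
      fun i j => sum_kd_r (fun k => Bt S i j k i) j
    simp_rw [c1, c2]
    have e : ∀ i j, Bt S i j j i = (S i j * S j i)/2 - (S i i * S j j)/2 := by
      intro i j; unfold Bt; ring
    simp_rw [e, Finset.sum_sub_distrib, ← Finset.sum_div]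
    rw [← Finset.sum_mul_sum Finset.univ Finset.univ (fun i => S i i) (fun j => S j j)]
    rw [hTr, zero_mul]
    have e2 : ∀ i j, S i j * S j i = S i j ^2 := by
      intro i j; rw [hS j i]; ring
    simp_rw [e2]
    rw [show (∑ i, ∑ j, S i j ^2) = qS S from rfl]
    ring
  have e : ∀ i j k l, Bt S i j k l * Gt S i j k l =
      (-(1/(2*((n:ℝ)-2)))) * (Bt S i j k l * (Pm S i k * kdelta j l))
      + (-(1/(2*((n:ℝ)-2)))) * (Bt S i j k l * (Pm S j l * kdelta i k))
      - (-(1/(2*((n:ℝ)-2)))) * (Bt S i j k l * (Pm S i l * kdelta j k))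
      - (-(1/(2*((n:ℝ)-2)))) * (Bt S i j k l * (Pm S j k * kdelta i l))
      + (qS S/(2*((n:ℝ)-1)*((n:ℝ)-2))) * (Bt S i j k l * (kdelta i k * kdelta j l))
      - (qS S/(2*((n:ℝ)-1)*((n:ℝ)-2))) * (Bt S i j k l * (kdelta i l * kdelta j k)) := by
    intro i j k l; unfold Gt; ring
  simp_rw [e]
  simp only [Finset.sum_add_distrib, Finset.sum_sub_distrib, ← Finset.mul_sum]
  rw [t1, t2, t3, t4, t5, t6]; ring
lemma kd_self (i : Fin n) : kdelta i i = 1 := by simp [kdelta]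

lemma cs4 (f g : Fin n → Fin n → Fin n → Fin n → ℝ) :
    (∑ i, ∑ j, ∑ k, ∑ l, f i j k l * g i j k l)^2 ≤
      (∑ i, ∑ j, ∑ k, ∑ l, f i j k l ^2) * (∑ i, ∑ j, ∑ k, ∑ l, g i j k l ^2) := by
  have := Finset.sum_mul_sq_le_sq_mul_sq (Finset.univ : Finset (Fin n × Fin n × Fin n × Fin n))
    (fun p => f p.1 p.2.1 p.2.2.1 p.2.2.2) (fun p => g p.1 p.2.1 p.2.2.1 p.2.2.2)
  simpa [Fintype.sum_prod_type] using this

lemma cs2 (f g : Fin n → Fin n → ℝ) :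
    (∑ i, ∑ j, f i j * g i j)^2 ≤ (∑ i, ∑ j, f i j ^2) * (∑ i, ∑ j, g i j ^2) := by
  have := Finset.sum_mul_sq_le_sq_mul_sq (Finset.univ : Finset (Fin n × Fin n))
    (fun p => f p.1 p.2) (fun p => g p.1 p.2)
  simpa [Fintype.sum_prod_type] using this

lemma trB0 (hS : ∀ i j, S j i = S i j) (hTr : ∑ i, S i i = 0) (hn : 3 ≤ n) :
    ∀ j l, ∑ i, (Bt S i j i l - Gt S i j i l) = 0 := by
  have hN2 : ((n:ℝ) - 2) ≠ 0 := by
    have : (3:ℝ) ≤ (n:ℝ) := by exact_mod_cast hn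
    linarith
  have hN1 : ((n:ℝ) - 1) ≠ 0 := by
    have : (3:ℝ) ≤ (n:ℝ) := by exact_mod_cast hn
    linarith
  intro j l
  have hB : ∑ i, Bt S i j i l = -(Pm S j l)/2 := by
    have e : ∀ i, Bt S i j i l = (S i i * S j l)/2 - (S j i * S i l)/2 := by
      intro i; unfold Bt; ring
    simp_rw [e, Finset.sum_sub_distrib, ← Finset.sum_div, ← Finset.sum_mul, hTr, zero_mul]
    rw [show (∑ i, S j i * S i l) = Pm S j l from rfl]
    ring
  have hG : ∑ i, Gt S i j i l = -(Pm S j l)/2 := by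
    have e : ∀ i, Gt S i j i l =
        (-(1/(2*((n:ℝ)-2)))) * (Pm S i i * kdelta j l)
        + (-(1/(2*((n:ℝ)-2)))) * (Pm S j l * kdelta i i)
        - (-(1/(2*((n:ℝ)-2)))) * (Pm S i l * kdelta j i)
        - (-(1/(2*((n:ℝ)-2)))) * (Pm S j i * kdelta i l)
        + (qS S/(2*((n:ℝ)-1)*((n:ℝ)-2))) * (kdelta i i * kdelta j l)
        - (qS S/(2*((n:ℝ)-1)*((n:ℝ)-2))) * (kdelta i l * kdelta j i) := by
      intro i; unfold Gt; ring
    simp_rw [e]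
    simp only [Finset.sum_add_distrib, Finset.sum_sub_distrib, ← Finset.mul_sum]
    have s1 : ∑ i, Pm S i i * kdelta j l = qS S * kdelta j l := by
      rw [← Finset.sum_mul, trP hS]
    have s2 : ∑ i : Fin n, kdelta i i = (n:ℝ) := by
      simp [kd_self, Finset.sum_const, Finset.card_univ]
    have s3 : ∑ i, Pm S i l * kdelta j i = Pm S j l :=
      sum_kd_r (fun i => Pm S i l) j
    have s4 : ∑ i, Pm S j i * kdelta i l = Pm S j l :=
      sum_kd_l (fun i => Pm S j i) l
    have s5 : ∑ i : Fin n, kdelta i i * kdelta j l = (n:ℝ) * kdelta j l := by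
      simp [kd_self, Finset.sum_const, Finset.card_univ]
    have s6 : ∑ i, kdelta i l * kdelta j i = kdelta j l := by
      rw [show (∑ i, kdelta i l * kdelta j i) = ∑ i, kdelta j i * kdelta i l from
        Finset.sum_congr rfl fun i _ => by ring]
      exact sum_kd_l (fun i => kdelta j i) l
    rw [s1, s2, s3, s4, s5, s6]
    field_simp
    ring
  rw [Finset.sum_sub_distrib, hB, hG]
  ring

lemma sumWB {W : Fin n → Fin n → Fin n → Fin n → ℝ}
    (hW2 : ∀ i j k l, W i j l k = - W i j k l) :
    ∑ i, ∑ j, ∑ k, ∑ l, W i j k l * Bt S i j k l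
      = ∑ i, ∑ j, ∑ k, ∑ l, W i j k l * S j l * S i k := by
  have hBW : ∀ i j, ∑ k, ∑ l, W i j k l * (S i l * S j k)
      = - ∑ k, ∑ l, W i j k l * (S i k * S j l) := by
    intro i j
    have e2 : ∀ k l, W i j k l * (S i l * S j k) = -(W i j l k * (S i l * S j k)) := by
      intro k l
      rw [show W i j k l = - W i j l k from hW2 i j l k]
      ring
    simp_rw [e2, Finset.sum_neg_distrib]
    rw [Finset.sum_comm]
  have e : ∀ i j k l, W i j k l * Bt S i j k l =
      (W i j k l * (S i k * S j l))/2 - (W i j k l * (S i l * S j k))/2 := by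
    intro i j k l; unfold Bt; ring
  simp_rw [e, Finset.sum_sub_distrib, ← Finset.sum_div]
  have H2 : ∑ i, ∑ j, ∑ k, ∑ l, W i j k l * (S i l * S j k)
      = - ∑ i, ∑ j, ∑ k, ∑ l, W i j k l * (S i k * S j l) := by
    simp_rw [hBW, Finset.sum_neg_distrib]
  have H3 : ∑ i, ∑ j, ∑ k, ∑ l, W i j k l * (S i k * S j l)
      = ∑ i, ∑ j, ∑ k, ∑ l, W i j k l * S j l * S i k :=
    Finset.sum_congr rfl fun i _ => Finset.sum_congr rfl fun j _ =>
      Finset.sum_congr rfl fun k _ => Finset.sum_congr rfl fun l _ => by ring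
  rw [H2, H3]
  ring
lemma twoCS {a b c d : ℝ} (ha : 0 ≤ a) (hb : 0 ≤ b) (hc : 0 ≤ c) (hd : 0 ≤ d) :
    Real.sqrt a * Real.sqrt c + Real.sqrt b * Real.sqrt d
      ≤ Real.sqrt (a+b) * Real.sqrt (c+d) := by
  rw [← Real.sqrt_mul ha, ← Real.sqrt_mul hb, ← Real.sqrt_mul (by linarith : (0:ℝ) ≤ a+b)]
  have hac : 0 ≤ a*c := mul_nonneg ha hc
  have hbd : 0 ≤ b*d := mul_nonneg hb hd
  have had : 0 ≤ a*d := mul_nonneg ha hd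
  have hbc : 0 ≤ b*c := mul_nonneg hb hc
  have key : (Real.sqrt (a*c) + Real.sqrt (b*d))^2 ≤ (a+b)*(c+d) := by
    have e1 := Real.sq_sqrt hac
    have e2 := Real.sq_sqrt hbd
    have e3 := Real.sq_sqrt had
    have e4 := Real.sq_sqrt hbc
    have cross : Real.sqrt (a*c) * Real.sqrt (b*d) = Real.sqrt (a*d) * Real.sqrt (b*c) := by
      rw [← Real.sqrt_mul hac, ← Real.sqrt_mul had]
      ring_nf
    nlinarith [sq_nonneg (Real.sqrt (a*d) - Real.sqrt (b*c)), cross,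
      Real.sqrt_nonneg (a*c), Real.sqrt_nonneg (b*d)]
  have h0 : 0 ≤ Real.sqrt (a*c) + Real.sqrt (b*d) :=
    add_nonneg (Real.sqrt_nonneg _) (Real.sqrt_nonneg _)
  calc Real.sqrt (a*c) + Real.sqrt (b*d)
      = Real.sqrt ((Real.sqrt (a*c) + Real.sqrt (b*d))^2) := (Real.sqrt_sq h0).symm
    _ ≤ Real.sqrt ((a+b)*(c+d)) := Real.sqrt_le_sqrt key

theorem keyIneq (hn : 3 ≤ n) (W : Fin n → Fin n → Fin n → Fin n → ℝ)
    (hS : ∀ i j, S j i = S i j) (hTr : ∑ i, S i i = 0)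
    (hW1 : ∀ i j k l, W j i k l = - W i j k l)
    (hW2 : ∀ i j k l, W i j l k = - W i j k l)
    (hWt : ∀ j l, ∑ i, W i j i l = 0) (lam : ℝ) :
    |(-(∑ i, ∑ j, ∑ k, ∑ l, W i j k l * S j l * S i k)
        + lam * ∑ i, ∑ j, ∑ k, S i j * S j k * S k i)| ≤
      Real.sqrt (((n:ℝ)-2)/(2*((n:ℝ)-1))) *
        Real.sqrt ((∑ i, ∑ j, ∑ k, ∑ l, W i j k l ^2)
          + 2*((n:ℝ)-2)*lam^2/(n:ℝ) * (∑ j, ∑ k, S j k ^2)) *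
        (∑ j, ∑ k, S j k ^2) := by
  have hN3 : (3:ℝ) ≤ (n:ℝ) := by exact_mod_cast hn
  have hN0 : (0:ℝ) < (n:ℝ) := by linarith
  have hN2 : (0:ℝ) < (n:ℝ) - 2 := by linarith
  have hN1 : (0:ℝ) < (n:ℝ) - 1 := by linarith
  set q : ℝ := ∑ j, ∑ k, S j k ^2 with hq_def
  set p3 : ℝ := ∑ i, ∑ j, ∑ k, S i j * S j k * S k i with hp3_def
  set p4 : ℝ := ∑ i, ∑ k, (Pm S i k)^2 with hp4_def
  set w : ℝ := ∑ i, ∑ j, ∑ k, ∑ l, W i j k l ^2 with hw_def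
  set B0 : Fin n → Fin n → Fin n → Fin n → ℝ :=
    fun i j k l => Bt S i j k l - Gt S i j k l with hB0_def
  set u : ℝ := ∑ i, ∑ j, ∑ k, ∑ l, W i j k l * B0 i j k l with hu_def
  set b : ℝ := ∑ i, ∑ j, ∑ k, ∑ l, B0 i j k l ^2 with hb_def
  -- basic nonnegativity
  have hq0 : 0 ≤ q := Finset.sum_nonneg fun i _ => Finset.sum_nonneg fun k _ => sq_nonneg _
  have hw0 : 0 ≤ w := Finset.sum_nonneg fun i _ => Finset.sum_nonneg fun j _ =>
    Finset.sum_nonneg fun k _ => Finset.sum_nonneg fun l _ => sq_nonneg _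
  have hb0 : 0 ≤ b := Finset.sum_nonneg fun i _ => Finset.sum_nonneg fun j _ =>
    Finset.sum_nonneg fun k _ => Finset.sum_nonneg fun l _ => sq_nonneg _
  have hp40 : 0 ≤ p4 := Finset.sum_nonneg fun i _ => Finset.sum_nonneg fun k _ => sq_nonneg _
  -- B0 symmetries
  have hB01 : ∀ i j k l, B0 j i k l = - B0 i j k l := by
    intro i j k l
    show Bt S j i k l - Gt S j i k l = -(Bt S i j k l - Gt S i j k l)
    unfold Bt Gt; ring
  have hB02 : ∀ i j k l, B0 i j l k = - B0 i j k l := by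
    intro i j k l
    show Bt S i j l k - Gt S i j l k = -(Bt S i j k l - Gt S i j k l)
    unfold Bt Gt; ring
  have hB0t : ∀ j l, ∑ i, B0 i j i l = 0 := trB0 hS hTr hn
  -- the contraction identity : cWTT = u
  have hcWTT : ∑ i, ∑ j, ∑ k, ∑ l, W i j k l * S j l * S i k = u := by
    rw [hu_def]
    have e : ∀ i j k l, W i j k l * B0 i j k l
        = W i j k l * Bt S i j k l - W i j k l * Gt S i j k l := by
      intro i j k l; show W i j k l * (Bt S i j k l - Gt S i j k l) = _; ring
    simp_rw [e]
    simp only [Finset.sum_sub_distrib]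
    rw [sumWB hW2, contrG hW1 hW2 hWt, sub_zero]
  -- value of b
  have hb_val : b = (q*q - p4)/2 - p4/((n:ℝ)-2) + q*q/(2*((n:ℝ)-1)*((n:ℝ)-2)) := by
    rw [hb_def]
    have e : ∀ i j k l, B0 i j k l ^2
        = B0 i j k l * Bt S i j k l - B0 i j k l * Gt S i j k l := by
      intro i j k l
      show (Bt S i j k l - Gt S i j k l)^2 = (Bt S i j k l - Gt S i j k l) * Bt S i j k l
        - (Bt S i j k l - Gt S i j k l) * Gt S i j k l
      ring
    simp_rw [e]
    simp only [Finset.sum_sub_distrib]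
    rw [contrG hB01 hB02 hB0t, sub_zero]
    have e2 : ∀ i j k l, B0 i j k l * Bt S i j k l
        = Bt S i j k l * Bt S i j k l - Bt S i j k l * Gt S i j k l := by
      intro i j k l
      show (Bt S i j k l - Gt S i j k l) * Bt S i j k l = _
      ring
    simp_rw [e2]
    simp only [Finset.sum_sub_distrib]
    rw [sumBB hS, sumGB hS hTr]
    have hqS : qS S = q := by rw [hq_def]; rfl
    rw [hqS, ← hp4_def]
    field_simp
    ring
  -- Cauchy-Schwarz for the W·B0 pairing
  have hcs1 : u^2 ≤ w * b := by
    rw [hu_def, hb_def, hw_def]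
    exact cs4 W B0
  -- Cauchy-Schwarz for p3
  have hcs2 : p3^2 ≤ q * (p4 - q^2/(n:ℝ)) := by
    have hp3P : (∑ i, ∑ k, S i k * Pm S i k) = p3 := by
      rw [hp3_def]
      refine Finset.sum_congr rfl fun i _ => ?_
      rw [show (∑ k, S i k * Pm S i k) = ∑ k, ∑ m, S i k * (S i m * S m k) from
        Finset.sum_congr rfl fun k _ => by rw [Pm, Finset.mul_sum]]
      rw [Finset.sum_comm]
      refine Finset.sum_congr rfl fun j _ => Finset.sum_congr rfl fun k _ => ?_
      rw [hS k i]; ring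
    have hSd : (∑ i, ∑ k, S i k * kdelta i k) = 0 := by
      have : ∀ i, ∑ k, S i k * kdelta i k = S i i := fun i => sum_kd_r (fun k => S i k) i
      simp_rw [this]; exact hTr
    have hPd : (∑ i, ∑ k, Pm S i k * kdelta i k) = q := by
      have : ∀ i, ∑ k, Pm S i k * kdelta i k = Pm S i i :=
        fun i => sum_kd_r (fun k => Pm S i k) i
      simp_rw [this]
      exact (trP hS).trans (by rw [hq_def]; rfl)
    have hdd : (∑ i : Fin n, ∑ k, (kdelta i k)^2) = (n:ℝ) := by
      simp [kdelta, sq, Finset.sum_ite_eq, Finset.card_univ]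
    have hg := cs2 S (fun i k => Pm S i k - q/(n:ℝ) * kdelta i k)
    have e1 : (∑ i, ∑ k, S i k * (Pm S i k - q/(n:ℝ) * kdelta i k)) = p3 := by
      have e : ∀ i k, S i k * (Pm S i k - q/(n:ℝ) * kdelta i k)
          = S i k * Pm S i k - (q/(n:ℝ)) * (S i k * kdelta i k) := by
        intro i k; ring
      simp_rw [e]
      simp only [Finset.sum_sub_distrib, ← Finset.mul_sum]
      rw [hp3P, hSd, mul_zero, sub_zero]
    have e2 : (∑ i, ∑ k, (Pm S i k - q/(n:ℝ) * kdelta i k)^2) = p4 - q^2/(n:ℝ) := by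
      have e : ∀ i k, (Pm S i k - q/(n:ℝ) * kdelta i k)^2
          = (Pm S i k)^2 - (2*(q/(n:ℝ))) * (Pm S i k * kdelta i k)
            + (q/(n:ℝ))^2 * (kdelta i k)^2 := by
        intro i k; ring
      simp_rw [e]
      simp only [Finset.sum_add_distrib, Finset.sum_sub_distrib, ← Finset.mul_sum]
      rw [← hp4_def, hPd, hdd]
      field_simp
      ring
    rw [e1, e2] at hg
    calc p3^2 ≤ (∑ i, ∑ k, S i k ^2) * (p4 - q^2/(n:ℝ)) := hg
      _ = q * (p4 - q^2/(n:ℝ)) := by rw [← hq_def]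
  -- endgame: make all quantities opaque
  clear_value B0 u b q p3 p4 w
  rw [hcWTT]
  rcases eq_or_lt_of_le hq0 with hq | hq
  · -- q = 0 : everything vanishes
    have hq' : q = 0 := hq.symm
    have h2 : b ≤ 0 := by
      rw [hb_val, hq']
      have h := div_nonneg hp40 hN2.le
      ring_nf
      ring_nf at h
      linarith
    have hbz : b = 0 := le_antisymm h2 hb0
    have h3 : u^2 ≤ 0 := by rw [hbz, mul_zero] at hcs1; exact hcs1
    have huz : u = 0 := (pow_eq_zero_iff two_ne_zero).mp (le_antisymm h3 (sq_nonneg u))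
    have h4 : p3^2 ≤ 0 := by
      rw [hq'] at hcs2; simpa using hcs2
    have hp3z : p3 = 0 := (pow_eq_zero_iff two_ne_zero).mp (le_antisymm h4 (sq_nonneg p3))
    rw [huz, hp3z, hq']
    simp
  · -- 0 < q
    have hbp : 2*((n:ℝ)-1)*((n:ℝ)-2)*b
        = ((n:ℝ)-1)*((n:ℝ)-2)*(q*q - p4) - 2*((n:ℝ)-1)*p4 + q*q := by
      rw [hb_val]; field_simp
    have hp' : (n:ℝ)*p3^2 ≤ (n:ℝ)*q*p4 - q^3 := by
      have h := mul_le_mul_of_nonneg_left hcs2 hN0.le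
      have e : (n:ℝ)*(q*(p4 - q^2/(n:ℝ))) = (n:ℝ)*q*p4 - q^3 := by field_simp
      rw [e] at h
      linarith
    have h3 : 2*((n:ℝ)-1)*((n:ℝ)-2)*(b*q) + (n:ℝ)*((n:ℝ)-1)*p3^2
        ≤ ((n:ℝ)-2)^2*q^3 := by
      have h1 : 2*((n:ℝ)-1)*((n:ℝ)-2)*(b*q)
          = (((n:ℝ)-1)*((n:ℝ)-2)*(q*q-p4) - 2*((n:ℝ)-1)*p4 + q*q)*q := by
        linear_combination q*hbp
      have h2 := mul_le_mul_of_nonneg_left hp' (by linarith : (0:ℝ) ≤ (n:ℝ)-1)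
      calc 2*((n:ℝ)-1)*((n:ℝ)-2)*(b*q) + (n:ℝ)*((n:ℝ)-1)*p3^2
          = (((n:ℝ)-1)*((n:ℝ)-2)*(q*q-p4) - 2*((n:ℝ)-1)*p4 + q*q)*q
            + (n:ℝ)*((n:ℝ)-1)*p3^2 := by rw [h1]
        _ ≤ (((n:ℝ)-1)*((n:ℝ)-2)*(q*q-p4) - 2*((n:ℝ)-1)*p4 + q*q)*q
            + ((n:ℝ)-1)*((n:ℝ)*q*p4 - q^3) := by linarith [h2]
        _ = ((n:ℝ)-2)^2*q^3 := by ring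
    set d : ℝ := (n:ℝ)*p3^2/(2*((n:ℝ)-2)*q) with hd_def
    have hd0 : 0 ≤ d := by rw [hd_def]; positivity
    clear_value d
    have hbd : b + d ≤ (((n:ℝ)-2)/(2*((n:ℝ)-1)))*q^2 := by
      have hpos : (0:ℝ) < 2*((n:ℝ)-1)*((n:ℝ)-2)*q := by positivity
      rw [← mul_le_mul_iff_of_pos_right hpos]
      have ed : d*(2*((n:ℝ)-1)*((n:ℝ)-2)*q) = (n:ℝ)*((n:ℝ)-1)*p3^2 := by
        rw [hd_def]; field_simp
      have eK : ((((n:ℝ)-2)/(2*((n:ℝ)-1)))*q^2)*(2*((n:ℝ)-1)*((n:ℝ)-2)*q)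
          = ((n:ℝ)-2)^2*q^3 := by field_simp
      calc (b+d)*(2*((n:ℝ)-1)*((n:ℝ)-2)*q)
          = 2*((n:ℝ)-1)*((n:ℝ)-2)*(b*q) + d*(2*((n:ℝ)-1)*((n:ℝ)-2)*q) := by ring
        _ = 2*((n:ℝ)-1)*((n:ℝ)-2)*(b*q) + (n:ℝ)*((n:ℝ)-1)*p3^2 := by rw [ed]
        _ ≤ ((n:ℝ)-2)^2*q^3 := by linarith [h3]
        _ = ((((n:ℝ)-2)/(2*((n:ℝ)-1)))*q^2)*(2*((n:ℝ)-1)*((n:ℝ)-2)*q) := eK.symm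
    have hb'0 : (0:ℝ) ≤ 2*((n:ℝ)-2)*lam^2/(n:ℝ)*q := by positivity
    have hK0 : (0:ℝ) ≤ ((n:ℝ)-2)/(2*((n:ℝ)-1)) := by positivity
    have hx : |(-u + lam*p3)| ≤ |u| + |lam*p3| := by
      calc |(-u + lam*p3)| ≤ |(-u)| + |lam*p3| := abs_add_le _ _
        _ = |u| + |lam*p3| := by rw [abs_neg]
    have hu_b : |u| ≤ Real.sqrt w * Real.sqrt b := by
      rw [← Real.sqrt_sq_eq_abs, ← Real.sqrt_mul hw0]
      exact Real.sqrt_le_sqrt hcs1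
    have hlp : |lam*p3| = Real.sqrt (2*((n:ℝ)-2)*lam^2/(n:ℝ)*q) * Real.sqrt d := by
      rw [← Real.sqrt_mul hb'0]
      have e : 2*((n:ℝ)-2)*lam^2/(n:ℝ)*q*d = (lam*p3)^2 := by
        rw [hd_def]; field_simp
      rw [e, Real.sqrt_sq_eq_abs]
    calc |(-u + lam*p3)| ≤ |u| + |lam*p3| := hx
      _ = |u| + Real.sqrt (2*((n:ℝ)-2)*lam^2/(n:ℝ)*q) * Real.sqrt d := by rw [hlp]
      _ ≤ Real.sqrt w * Real.sqrt b
          + Real.sqrt (2*((n:ℝ)-2)*lam^2/(n:ℝ)*q) * Real.sqrt d := by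
            exact add_le_add_left hu_b _
      _ ≤ Real.sqrt (w + 2*((n:ℝ)-2)*lam^2/(n:ℝ)*q) * Real.sqrt (b + d) :=
            twoCS hw0 hb'0 hb0 hd0
      _ ≤ Real.sqrt (w + 2*((n:ℝ)-2)*lam^2/(n:ℝ)*q)
            * Real.sqrt ((((n:ℝ)-2)/(2*((n:ℝ)-1)))*q^2) :=
            mul_le_mul_of_nonneg_left (Real.sqrt_le_sqrt hbd) (Real.sqrt_nonneg _)
      _ = Real.sqrt (((n:ℝ)-2)/(2*((n:ℝ)-1)))
            * Real.sqrt (w + 2*((n:ℝ)-2)*lam^2/(n:ℝ)*q) * q := by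
            rw [Real.sqrt_mul hK0 (q^2), Real.sqrt_sq hq.le]
            ring


variable {M : Type} (D : GeomData n M)

lemma ric_symm (x : M) (j k : Fin n) : D.Ric x k j = D.Ric x j k :=
  Finset.sum_congr rfl fun i _ => D.rm_pair x i j i k

lemma kd_comm (i j : Fin n) : kdelta i j = kdelta j i := by
  simp [kdelta, eq_comm]

lemma tric_symm (x : M) : ∀ i j, D.TRic x j i = D.TRic x i j := by
  intro i j
  unfold GeomData.TRic
  rw [ric_symm, kd_comm]

lemma tric_tr (hn : 3 ≤ n) (x : M) : ∑ i, D.TRic x i i = 0 := by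
  have hN0 : ((n:ℝ)) ≠ 0 := by
    have : (3:ℝ) ≤ (n:ℝ) := by exact_mod_cast hn
    linarith
  unfold GeomData.TRic
  rw [Finset.sum_sub_distrib]
  simp only [kd_self, mul_one]
  rw [show (∑ i : Fin n, D.Ric x i i) = D.R x from rfl, Finset.sum_const,
    Finset.card_univ, Fintype.card_fin, nsmul_eq_mul]
  field_simp
  ring

lemma w_anti1 (x : M) : ∀ i j k l, D.W x j i k l = - D.W x i j k l := by
  intro i j k l
  unfold GeomData.W
  rw [D.rm_antisymm₁]
  ring

lemma w_anti2 (x : M) : ∀ i j k l, D.W x i j l k = - D.W x i j k l := by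
  intro i j k l
  unfold GeomData.W
  rw [D.rm_antisymm₂]
  ring

lemma w_tracefree (hn : 3 ≤ n) (x : M) : ∀ j l, ∑ i, D.W x i j i l = 0 := by
  have hN3 : (3:ℝ) ≤ (n:ℝ) := by exact_mod_cast hn
  have hN2 : ((n:ℝ)) - 2 ≠ 0 := by linarith
  have hN1 : ((n:ℝ)) - 1 ≠ 0 := by linarith
  intro j l
  have e : ∀ i, D.W x i j i l =
      D.Rm x i j i l
      - (1/((n:ℝ)-2)) * (D.Ric x i i * kdelta j l)
      + (1/((n:ℝ)-2)) * (D.Ric x i l * kdelta j i)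
      - (1/((n:ℝ)-2)) * (D.Ric x j l * kdelta i i)
      + (1/((n:ℝ)-2)) * (D.Ric x j i * kdelta i l)
      + (D.R x/(((n:ℝ)-1)*((n:ℝ)-2))) * (kdelta i i * kdelta j l)
      - (D.R x/(((n:ℝ)-1)*((n:ℝ)-2))) * (kdelta i l * kdelta j i) := by
    intro i; unfold GeomData.W; ring
  simp_rw [e]
  simp only [Finset.sum_add_distrib, Finset.sum_sub_distrib, ← Finset.mul_sum]
  have s0 : (∑ i, D.Rm x i j i l) = D.Ric x j l := rfl
  have s1 : (∑ i, D.Ric x i i * kdelta j l) = D.R x * kdelta j l := by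
    rw [← Finset.sum_mul]
    rfl
  have s2 : (∑ i, D.Ric x i l * kdelta j i) = D.Ric x j l :=
    sum_kd_r (fun i => D.Ric x i l) j
  have s3 : (∑ i : Fin n, kdelta i i) = (n:ℝ) := by
    simp [kd_self, Finset.sum_const, Finset.card_univ]
  have s4 : (∑ i, D.Ric x j i * kdelta i l) = D.Ric x j l :=
    sum_kd_l (fun i => D.Ric x j i) l
  have s5 : (∑ i : Fin n, kdelta i i * kdelta j l) = (n:ℝ) * kdelta j l := by
    simp [kd_self, Finset.sum_const, Finset.card_univ]
  have s6 : (∑ i : Fin n, kdelta i l * kdelta j i) = kdelta j l := by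
    rw [show (∑ i : Fin n, kdelta i l * kdelta j i) = ∑ i, kdelta j i * kdelta i l from
      Finset.sum_congr rfl fun i _ => by ring]
    exact sum_kd_l (fun i => kdelta j i) l
  rw [s0, s1, s2, s3, s4, s5, s6]
  field_simp
  ring

end Helpers

end

theorem stmt12 {n : ℕ} (hn : 3 ≤ n) {M : Type} (D : GeomData n M) (lam : ℝ) :
    ∀ x, |(-(D.cWTT x) + lam * D.cTTT x)| ≤
        Real.sqrt ((((n : ℝ)) - 2) / (2 * (((n : ℝ)) - 1))) *
          Real.sqrt (D.normSqW x + 2 * (((n : ℝ)) - 2) * lam ^ 2 / ((n : ℝ)) * D.normSqTRic x) *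
          D.normSqTRic x ∧
      Real.sqrt ((((n : ℝ)) - 2) / (2 * (((n : ℝ)) - 1))) *
          Real.sqrt (D.normSqW x + 2 * (((n : ℝ)) - 2) * lam ^ 2 / ((n : ℝ)) * D.normSqTRic x) *
          D.normSqTRic x =
        Real.sqrt ((((n : ℝ)) - 2) / (2 * (((n : ℝ)) - 1))) * D.WKN lam x * D.normSqTRic x := by
  intro x
  constructor
  · have h := Helpers.keyIneq (S := D.TRic x) hn (D.W x) (Helpers.tric_symm D x)
      (Helpers.tric_tr D hn x) (Helpers.w_anti1 D x) (Helpers.w_anti2 D x)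
      (Helpers.w_tracefree D hn x) lam
    unfold GeomData.cWTT GeomData.cTTT GeomData.normSqW GeomData.normSqTRic
    exact h
  · rfl
end

section
/- For every Riemannian manifold (M^n, g) of dimension n ≥ 3, the pointwise estimate |W_{ikpq} W_{jkpq} R̊_{ij}| ≤ √((n−1)/n) · |W|² · |R̊| holds. -/
open MeasureTheory

section Aux

open Finset

lemma kdelta_collapse {n : ℕ} (f : Fin n → ℝ) (i : Fin n) :
    ∑ j : Fin n, kdelta i j * f j = f i := by
  simp [kdelta, ite_mul, Finset.sum_ite_eq]

lemma aux_cs {n : ℕ} (hn : 0 < n) (T B : Fin n → Fin n → ℝ)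
    (hT : ∑ i : Fin n, T i i = 0)
    (hBsq : ∑ i : Fin n, ∑ j : Fin n, (B i j) ^ 2 ≤ (∑ i : Fin n, B i i) ^ 2)
    (htr : 0 ≤ ∑ i : Fin n, B i i) :
    |∑ i : Fin n, ∑ j : Fin n, B i j * T i j| ≤
      Real.sqrt (((n : ℝ) - 1) / n) * (∑ i : Fin n, B i i) *
        Real.sqrt (∑ i : Fin n, ∑ j : Fin n, (T i j) ^ 2) := by
  have hn0 : (n : ℝ) ≠ 0 := Nat.cast_ne_zero.mpr hn.ne'
  set b := ∑ i : Fin n, B i i with hb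
  set B' : Fin n → Fin n → ℝ := fun i j => B i j - b / n * kdelta i j with hB'
  have hX : ∑ i : Fin n, ∑ j : Fin n, B i j * T i j
      = ∑ i : Fin n, ∑ j : Fin n, B' i j * T i j := by
    have : ∀ i : Fin n, ∑ j : Fin n, B' i j * T i j
        = (∑ j : Fin n, B i j * T i j) - b / n * T i i := by
      intro i
      simp only [hB', sub_mul, Finset.sum_sub_distrib, mul_assoc]
      rw [← Finset.mul_sum, kdelta_collapse (fun j => T i j) i]
    rw [Finset.sum_congr rfl fun i _ => this i, Finset.sum_sub_distrib,
      ← Finset.mul_sum, hT]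
    ring
  have hdsum : ∑ i : Fin n, ∑ j : Fin n, kdelta i j * B i j = b := by
    rw [hb]; exact Finset.sum_congr rfl fun i _ => kdelta_collapse (fun j => B i j) i
  have hdsq : ∑ i : Fin n, ∑ j : Fin n, (kdelta i j) ^ 2 = (n : ℝ) := by
    have : ∀ i : Fin n, ∑ j : Fin n, (kdelta i j) ^ 2 = 1 := by
      intro i; simp [kdelta, ite_pow, Finset.sum_ite_eq]
    rw [Finset.sum_congr rfl fun i _ => this i]; simp
  have hB'sq : ∑ i : Fin n, ∑ j : Fin n, (B' i j) ^ 2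
      = (∑ i : Fin n, ∑ j : Fin n, (B i j) ^ 2) - b ^ 2 / n := by
    have expand : ∀ i j : Fin n, (B' i j) ^ 2
        = (B i j) ^ 2 - (2 * (b / n)) * (kdelta i j * B i j)
          + (b / n) ^ 2 * (kdelta i j) ^ 2 := by
      intro i j; simp only [hB']; ring
    calc ∑ i : Fin n, ∑ j : Fin n, (B' i j) ^ 2
        = (∑ i : Fin n, ∑ j : Fin n, (B i j) ^ 2)
          - (2 * (b / n)) * (∑ i : Fin n, ∑ j : Fin n, kdelta i j * B i j)
          + (b / n) ^ 2 * (∑ i : Fin n, ∑ j : Fin n, (kdelta i j) ^ 2) := by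
          simp only [expand, Finset.sum_add_distrib, Finset.sum_sub_distrib,
            ← Finset.mul_sum]
      _ = (∑ i : Fin n, ∑ j : Fin n, (B i j) ^ 2) - b ^ 2 / n := by
          rw [hdsum, hdsq]; field_simp; ring
  have hB'le : ∑ i : Fin n, ∑ j : Fin n, (B' i j) ^ 2 ≤ b ^ 2 * (((n : ℝ) - 1) / n) := by
    rw [hB'sq]
    have h1 : (1 : ℝ) ≤ (n : ℝ) := by exact_mod_cast hn
    have : b ^ 2 * (((n : ℝ) - 1) / n) = b ^ 2 - b ^ 2 / n := by field_simp
    rw [this]; linarith [hBsq]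
  have cs : (∑ i : Fin n, ∑ j : Fin n, B' i j * T i j) ^ 2
      ≤ (∑ i : Fin n, ∑ j : Fin n, (B' i j) ^ 2)
        * (∑ i : Fin n, ∑ j : Fin n, (T i j) ^ 2) := by
    have := Finset.sum_mul_sq_le_sq_mul_sq Finset.univ
      (fun p : Fin n × Fin n => B' p.1 p.2) (fun p : Fin n × Fin n => T p.1 p.2)
    simpa [Fintype.sum_prod_type] using this
  have hTsq : (0 : ℝ) ≤ ∑ i : Fin n, ∑ j : Fin n, (T i j) ^ 2 :=
    Finset.sum_nonneg fun i _ => Finset.sum_nonneg fun j _ => sq_nonneg _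
  have hc : (0 : ℝ) ≤ ((n : ℝ) - 1) / n := by
    have h1 : (1 : ℝ) ≤ (n : ℝ) := by exact_mod_cast hn
    exact div_nonneg (by linarith) (by positivity)
  rw [hX, ← Real.sqrt_sq_eq_abs]
  calc Real.sqrt ((∑ i : Fin n, ∑ j : Fin n, B' i j * T i j) ^ 2)
      ≤ Real.sqrt ((b ^ 2 * (((n : ℝ) - 1) / n))
          * (∑ i : Fin n, ∑ j : Fin n, (T i j) ^ 2)) := by
        apply Real.sqrt_le_sqrt
        exact cs.trans (mul_le_mul_of_nonneg_right hB'le hTsq)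
    _ = Real.sqrt (((n : ℝ) - 1) / n) * b
        * Real.sqrt (∑ i : Fin n, ∑ j : Fin n, (T i j) ^ 2) := by
        rw [Real.sqrt_mul (by positivity), Real.sqrt_mul (sq_nonneg b),
          Real.sqrt_sq htr]
        ring

end Aux

theorem stmt13 {n : ℕ} (hn : 3 ≤ n) {M : Type} (D : GeomData n M) :
    ∀ x, |D.cWWT x| ≤ Real.sqrt ((((n : ℝ)) - 1) / ((n : ℝ))) * D.normSqW x * D.normTRic x := by
  intro x
  have hn0 : 0 < n := lt_of_lt_of_le (by norm_num) hn
  have hn0' : (n : ℝ) ≠ 0 := Nat.cast_ne_zero.mpr hn0.ne'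
  set T : Fin n → Fin n → ℝ := D.TRic x with hT
  set B : Fin n → Fin n → ℝ :=
    fun i j => ∑ k : Fin n, ∑ p : Fin n, ∑ q : Fin n, D.W x i k p q * D.W x j k p q with hB
  have htrT : ∑ i : Fin n, T i i = 0 := by
    have h1 : ∑ i : Fin n, T i i = D.R x - (n : ℝ) * (D.R x / n) := by
      simp [hT, GeomData.TRic, kdelta, Finset.sum_sub_distrib, GeomData.R,
        Finset.sum_const, nsmul_eq_mul]
    rw [h1, mul_div_cancel₀ _ hn0']; ring
  have hcw : D.cWWT x = ∑ i : Fin n, ∑ j : Fin n, B i j * T i j := by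
    simp only [GeomData.cWWT, hB, hT, ← Finset.sum_mul]
  have flat : ∀ i j : Fin n, B i j = ∑ p : Fin n × Fin n × Fin n,
      D.W x i p.1 p.2.1 p.2.2 * D.W x j p.1 p.2.1 p.2.2 := by
    intro i j; simp [hB, Fintype.sum_prod_type]
  have flatsq : ∀ i : Fin n, B i i = ∑ p : Fin n × Fin n × Fin n,
      (D.W x i p.1 p.2.1 p.2.2) ^ 2 := by
    intro i; rw [flat]; exact Finset.sum_congr rfl fun p _ => (sq _).symm
  have hBnn : ∀ i : Fin n, 0 ≤ B i i := by
    intro i; rw [flatsq]; exact Finset.sum_nonneg fun p _ => sq_nonneg _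
  have hBsq : ∑ i : Fin n, ∑ j : Fin n, (B i j) ^ 2 ≤ (∑ i : Fin n, B i i) ^ 2 := by
    have hpt : ∀ i j : Fin n, (B i j) ^ 2 ≤ B i i * B j j := by
      intro i j
      rw [flat i j, flatsq i, flatsq j]
      exact Finset.sum_mul_sq_le_sq_mul_sq Finset.univ _ _
    calc ∑ i : Fin n, ∑ j : Fin n, (B i j) ^ 2
        ≤ ∑ i : Fin n, ∑ j : Fin n, B i i * B j j :=
          Finset.sum_le_sum fun i _ => Finset.sum_le_sum fun j _ => hpt i j
      _ = (∑ i : Fin n, B i i) ^ 2 := by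
          rw [sq, Finset.sum_mul_sum]
  have htrBnn : 0 ≤ ∑ i : Fin n, B i i := Finset.sum_nonneg fun i _ => hBnn i
  have hW : D.normSqW x = ∑ i : Fin n, B i i := by
    rw [GeomData.normSqW]
    exact Finset.sum_congr rfl fun i _ => by simp [flatsq, Fintype.sum_prod_type]
  have hTn : D.normTRic x = Real.sqrt (∑ i : Fin n, ∑ j : Fin n, (T i j) ^ 2) := rfl
  rw [hcw, hW, hTn]
  exact aux_cs hn0 T B htrT hBsq htrBnn
end

section
/- Let M^n be a closed manifold of dimension n ≥ 3 and let g be a critical metric for F_{t,s} on M₁(M^n). Then the traceless Ricci tensor satisfies the identity (1+4s)ΔR̊_{ij} = (1+2t+2s)(R_{,ij} − (1/n)(ΔR)g_{ij}) − ((2(n−2)+4ns)/(n−2)) W_{ikjl} R̊_{kl} − 2s W_{ikpq} W_{jkpq} + [ −((4s(n²−3n+4)+4(n−2))/(n(n−2)²)) |R̊|² + (2s/n) |W|² ] g_{ij} + ((4s(n²−3n+4)+4(n−2))/(n−2)²) R̊_{ik} R̊_{jk} + ((4−2n−2n(n−1)t+4(n−2)s)/(n(n−1))) R R̊_{ij}.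 -/
open MeasureTheory

section AuxLemmas

open Finset

lemma kdelta_mul_left' {n : ℕ} (i j : Fin n) (x : ℝ) :
    kdelta i j * x = if i = j then x else 0 := by
  simp only [kdelta]; split <;> simp

lemma mul_kdelta_right' {n : ℕ} (i j : Fin n) (x : ℝ) :
    x * kdelta i j = if i = j then x else 0 := by
  simp only [kdelta]; split <;> simp

lemma sum_kdelta_diag {n : ℕ} : ∑ i : Fin n, kdelta i i = (n : ℝ) := by
  simp [kdelta]

namespace GeomData

variable {n : ℕ} {M : Type} (D : GeomData n M) (x : M)

lemma ric_symm (j k : Fin n) : D.Ric x j k = D.Ric x k j := by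
  unfold Ric; exact Finset.sum_congr rfl fun i _ => D.rm_pair x i k i j

lemma tric_symm (j k : Fin n) : D.TRic x j k = D.TRic x k j := by
  unfold TRic kdelta
  rw [D.ric_symm x j k]
  congr 2
  simp [eq_comm]

lemma sum_tric_diag (hn : (n : ℝ) ≠ 0) : ∑ k : Fin n, D.TRic x k k = 0 := by
  unfold TRic
  rw [Finset.sum_sub_distrib, ← Finset.mul_sum, sum_kdelta_diag]
  field_simp [R]
  exact sub_self _

end GeomData

end AuxLemmas

lemma kdelta_comm {n : ℕ} (i j : Fin n) : kdelta i j = kdelta j i := by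
  unfold kdelta
  by_cases h : i = j
  · simp [h]
  · rw [if_neg h, if_neg fun hji => h hji.symm]

namespace GeomData

variable {n : ℕ} {M : Type} (D : GeomData n M) (x : M)

lemma w_antisymm₁ (i j k l : Fin n) : D.W x j i k l = - D.W x i j k l := by
  unfold W; rw [D.rm_antisymm₁]; ring

lemma w_antisymm₂ (i j k l : Fin n) : D.W x i j l k = - D.W x i j k l := by
  unfold W; rw [D.rm_antisymm₂]; ring

lemma w_pair (i j k l : Fin n) : D.W x k l i j = D.W x i j k l := by
  unfold W
  conv_lhs => rw [D.rm_pair, D.ric_symm x k i, D.ric_symm x k j, D.ric_symm x l i,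
    D.ric_symm x l j, kdelta_comm k i, kdelta_comm k j, kdelta_comm l i, kdelta_comm l j]
  ring

lemma trW13 (hn2 : ((n : ℝ) - 2) ≠ 0) (hn1 : ((n : ℝ) - 1) ≠ 0) (j l : Fin n) :
    ∑ i : Fin n, D.W x i j i l = 0 := by
  have hRic : (∑ i : Fin n, D.Rm x i j i l) = D.Ric x j l := rfl
  have hR : (∑ i : Fin n, D.Ric x i i) = D.R x := rfl
  have hR' : ∀ c : ℝ, (∑ i : Fin n, c * D.Ric x i i) = c * D.R x := fun c => by
    rw [← Finset.mul_sum, hR]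
  have hR'' : ∀ c : ℝ, (∑ i : Fin n, D.Ric x i i * c) = D.R x * c := fun c => by
    rw [← Finset.sum_mul, hR]
  unfold W
  simp only [mul_sub, mul_add, sub_mul, add_mul, mul_kdelta_right', kdelta_mul_left',
    mul_ite, ite_mul, mul_zero, zero_mul, mul_one, one_mul]
  rw [Finset.sum_add_distrib, Finset.sum_sub_distrib]
  simp only [Finset.sum_sub_distrib, Finset.sum_add_distrib, Finset.sum_ite_eq,
    Finset.sum_ite_eq', Finset.mem_univ, if_true]
  rw [hRic]
  by_cases hjl : j = l
  · subst hjl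
    simp only [eq_self_iff_true, if_true, hR', hR'', Finset.sum_const, Finset.card_univ,
      Fintype.card_fin, nsmul_eq_mul]
    have h3 : ((n:ℝ) * n - n - (n * 2 - 2)) ≠ 0 := by
      rw [show ((n:ℝ) * n - n - (n * 2 - 2)) = ((n:ℝ) - 1) * ((n:ℝ) - 2) by ring]
      exact mul_ne_zero hn1 hn2
    field_simp
    ring
  · simp only [if_neg hjl, Finset.sum_const, Finset.card_univ, Fintype.card_fin,
      nsmul_eq_mul, Finset.sum_const_zero]
    field_simp
    ring

lemma trW24 (hn2 : ((n : ℝ) - 2) ≠ 0) (hn1 : ((n : ℝ) - 1) ≠ 0) (i p : Fin n) :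
    ∑ k : Fin n, D.W x i k p k = 0 := by
  have h : ∀ k : Fin n, D.W x i k p k = D.W x k i k p := by
    intro k
    rw [D.w_antisymm₁ x k i p k, D.w_antisymm₂ x k i k p, neg_neg]
  simp only [h]
  exact D.trW13 x hn2 hn1 i p

lemma trW23 (hn2 : ((n : ℝ) - 2) ≠ 0) (hn1 : ((n : ℝ) - 1) ≠ 0) (i q : Fin n) :
    ∑ k : Fin n, D.W x i k k q = 0 := by
  have h : ∀ k : Fin n, D.W x i k k q = - D.W x k i k q := by
    intro k; rw [D.w_antisymm₁ x k i k q]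
  simp only [h]
  rw [Finset.sum_neg_distrib, D.trW13 x hn2 hn1 i q, neg_zero]

lemma trW14 (hn2 : ((n : ℝ) - 2) ≠ 0) (hn1 : ((n : ℝ) - 1) ≠ 0) (i p : Fin n) :
    ∑ k : Fin n, D.W x k i p k = 0 := by
  have h : ∀ k : Fin n, D.W x k i p k = - D.W x k i k p := by
    intro k; rw [D.w_antisymm₂ x k i k p]
  simp only [h]
  rw [Finset.sum_neg_distrib, D.trW13 x hn2 hn1 i p, neg_zero]

end GeomData
namespace GeomData

variable {n : ℕ} {M : Type} (D : GeomData n M) (x : M)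

lemma rm_decomp (hn0 : (n : ℝ) ≠ 0) (hn1 : ((n : ℝ) - 1) ≠ 0) (hn2 : ((n : ℝ) - 2) ≠ 0)
    (a b c d : Fin n) :
    D.Rm x a b c d = D.W x a b c d
      + (1 / ((n : ℝ) - 2)) * (D.TRic x a c * kdelta b d - D.TRic x a d * kdelta b c
          + D.TRic x b d * kdelta a c - D.TRic x b c * kdelta a d)
      + D.R x / ((n : ℝ) * ((n : ℝ) - 1)) *
          (kdelta a c * kdelta b d - kdelta a d * kdelta b c) := by
  unfold W TRic
  field_simp
  ring

lemma sum_c_tric_diag : ∀ c : ℝ, (∑ k : Fin n, c * D.TRic x k k) = c * ∑ k : Fin n, D.TRic x k k :=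
  fun c => (Finset.mul_sum _ _ _).symm

lemma rmT_decomp (hn0 : (n : ℝ) ≠ 0) (hn1 : ((n : ℝ) - 1) ≠ 0) (hn2 : ((n : ℝ) - 2) ≠ 0)
    (i j : Fin n) :
    ∑ k : Fin n, ∑ l : Fin n, D.Rm x i k j l * D.TRic x k l
      = (∑ k : Fin n, ∑ l : Fin n, D.W x i k j l * D.TRic x k l)
        - 2 / ((n : ℝ) - 2) * (∑ k : Fin n, D.TRic x i k * D.TRic x j k)
        + 1 / ((n : ℝ) - 2) * D.normSqTRic x * kdelta i j
        - 1 / ((n : ℝ) * ((n : ℝ) - 1)) * D.R x * D.TRic x i j := by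
  have hT0 : ∀ c : ℝ, (∑ k : Fin n, c * D.TRic x k k) = 0 := fun c => by
    rw [← Finset.mul_sum, D.sum_tric_diag x hn0, mul_zero]
  have hN : (∑ k : Fin n, ∑ l : Fin n, 1 / ((n : ℝ) - 2) * D.TRic x k l * D.TRic x k l)
      = 1 / ((n : ℝ) - 2) * D.normSqTRic x := by
    unfold normSqTRic
    rw [Finset.mul_sum]
    refine Finset.sum_congr rfl fun k _ => ?_
    rw [Finset.mul_sum]
    exact Finset.sum_congr rfl fun l _ => by ring
  have hTT : (∑ k : Fin n, 1 / ((n : ℝ) - 2) * D.TRic x k j * D.TRic x k i)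
      = 1 / ((n : ℝ) - 2) * ∑ k : Fin n, D.TRic x i k * D.TRic x j k := by
    rw [Finset.mul_sum]
    refine Finset.sum_congr rfl fun k _ => ?_
    rw [D.tric_symm x k j, D.tric_symm x k i]
    ring
  have hTT2 : ∀ c : ℝ, (∑ l : Fin n, c * D.TRic x i l * D.TRic x j l)
      = c * ∑ k : Fin n, D.TRic x i k * D.TRic x j k := fun c => by
    rw [Finset.mul_sum]
    exact Finset.sum_congr rfl fun l _ => by ring
  simp only [D.rm_decomp x hn0 hn1 hn2]
  simp only [add_mul, sub_mul, mul_sub, mul_add, mul_kdelta_right', kdelta_mul_left',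
    mul_ite, ite_mul, mul_zero, zero_mul, mul_one, one_mul, Finset.sum_add_distrib,
    Finset.sum_sub_distrib, Finset.sum_ite_irrel, Finset.sum_const_zero, Finset.sum_ite_eq,
    Finset.sum_ite_eq', Finset.mem_univ, if_true]
  have hsym : D.TRic x j i = D.TRic x i j := D.tric_symm x j i
  simp only [hT0, hN, hTT, hTT2, hsym]
  by_cases hij : i = j <;> simp [hij] <;> field_simp <;> ring

end GeomData
namespace GeomData

variable {n : ℕ} {M : Type} (D : GeomData n M) (x : M)

lemma crossWE (hn0 : (n : ℝ) ≠ 0) (hn1 : ((n : ℝ) - 1) ≠ 0) (hn2 : ((n : ℝ) - 2) ≠ 0)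
    (i j : Fin n) :
    ∑ k : Fin n, ∑ p : Fin n, ∑ q : Fin n, D.W x i k p q *
      ((1 / ((n : ℝ) - 2)) * (D.TRic x j p * kdelta k q - D.TRic x j q * kdelta k p
          + D.TRic x k q * kdelta j p - D.TRic x k p * kdelta j q)
        + D.R x / ((n : ℝ) * ((n : ℝ) - 1)) *
            (kdelta j p * kdelta k q - kdelta j q * kdelta k p))
    = 2 / ((n : ℝ) - 2) * ∑ k : Fin n, ∑ l : Fin n, D.W x i k j l * D.TRic x k l := by
  simp only [add_mul, sub_mul, mul_sub, mul_add, mul_kdelta_right', kdelta_mul_left',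
    mul_ite, ite_mul, mul_zero, zero_mul, mul_one, one_mul, Finset.sum_add_distrib,
    Finset.sum_sub_distrib, Finset.sum_ite_irrel, Finset.sum_const_zero, Finset.sum_ite_eq,
    Finset.sum_ite_eq', Finset.mem_univ, if_true]
  have h1 : (∑ k : Fin n, ∑ p : Fin n, D.W x i k p k * (1 / ((n : ℝ) - 2) * D.TRic x j p)) = 0 := by
    rw [Finset.sum_comm]
    refine Finset.sum_eq_zero fun p _ => ?_
    rw [← Finset.sum_mul, D.trW24 x hn2 hn1 i p, zero_mul]
  have h2 : (∑ k : Fin n, ∑ p : Fin n, D.W x i k k p * (1 / ((n : ℝ) - 2) * D.TRic x j p)) = 0 := by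
    rw [Finset.sum_comm]
    refine Finset.sum_eq_zero fun p _ => ?_
    rw [← Finset.sum_mul, D.trW23 x hn2 hn1 i p, zero_mul]
  have h3 : (∑ k : Fin n, ∑ l : Fin n, D.W x i k j l * (1 / ((n : ℝ) - 2) * D.TRic x k l))
      = 1 / ((n : ℝ) - 2) * ∑ k : Fin n, ∑ l : Fin n, D.W x i k j l * D.TRic x k l := by
    rw [Finset.mul_sum]
    refine Finset.sum_congr rfl fun k _ => ?_
    rw [Finset.mul_sum]
    exact Finset.sum_congr rfl fun l _ => by ring
  have h4 : (∑ k : Fin n, ∑ l : Fin n, D.W x i k l j * (1 / ((n : ℝ) - 2) * D.TRic x k l))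
      = -(1 / ((n : ℝ) - 2) * ∑ k : Fin n, ∑ l : Fin n, D.W x i k j l * D.TRic x k l) := by
    rw [← h3, ← Finset.sum_neg_distrib]
    refine Finset.sum_congr rfl fun k _ => ?_
    rw [← Finset.sum_neg_distrib]
    refine Finset.sum_congr rfl fun l _ => ?_
    rw [D.w_antisymm₂ x i k j l]
    ring
  have h5 : (∑ k : Fin n, D.W x i k j k * (D.R x / ((n : ℝ) * (n : ℝ) - (n : ℝ)))) = 0 := by
    rw [← Finset.sum_mul, D.trW24 x hn2 hn1 i j, zero_mul]
  have h6 : (∑ k : Fin n, D.W x i k k j * (D.R x / ((n : ℝ) * (n : ℝ) - (n : ℝ)))) = 0 := by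
    rw [← Finset.sum_mul, D.trW23 x hn2 hn1 i j, zero_mul]
  rw [h1, h2, h3, h4, h5, h6]
  ring

end GeomData

namespace GeomData

variable {n : ℕ} {M : Type} (D : GeomData n M) (x : M)

lemma wt_swap (i j : Fin n) :
    (∑ k : Fin n, ∑ l : Fin n, D.W x j k i l * D.TRic x k l)
      = ∑ k : Fin n, ∑ l : Fin n, D.W x i k j l * D.TRic x k l := by
  rw [Finset.sum_comm]
  refine Finset.sum_congr rfl fun a _ => Finset.sum_congr rfl fun b _ => ?_
  rw [D.w_pair x i a j b, D.tric_symm x b a]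

lemma crossEW (hn0 : (n : ℝ) ≠ 0) (hn1 : ((n : ℝ) - 1) ≠ 0) (hn2 : ((n : ℝ) - 2) ≠ 0)
    (i j : Fin n) :
    ∑ k : Fin n, ∑ p : Fin n, ∑ q : Fin n,
      ((1 / ((n : ℝ) - 2)) * (D.TRic x i p * kdelta k q - D.TRic x i q * kdelta k p
          + D.TRic x k q * kdelta i p - D.TRic x k p * kdelta i q)
        + D.R x / ((n : ℝ) * ((n : ℝ) - 1)) *
            (kdelta i p * kdelta k q - kdelta i q * kdelta k p)) * D.W x j k p q
    = 2 / ((n : ℝ) - 2) * ∑ k : Fin n, ∑ l : Fin n, D.W x i k j l * D.TRic x k l := by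
  simp only [add_mul, sub_mul, mul_sub, mul_add, mul_kdelta_right', kdelta_mul_left',
    mul_ite, ite_mul, mul_zero, zero_mul, mul_one, one_mul, Finset.sum_add_distrib,
    Finset.sum_sub_distrib, Finset.sum_ite_irrel, Finset.sum_const_zero, Finset.sum_ite_eq,
    Finset.sum_ite_eq', Finset.mem_univ, if_true]
  have h1 : (∑ k : Fin n, ∑ p : Fin n, 1 / ((n : ℝ) - 2) * D.TRic x i p * D.W x j k p k) = 0 := by
    rw [Finset.sum_comm]
    refine Finset.sum_eq_zero fun p _ => ?_
    rw [← Finset.mul_sum, D.trW24 x hn2 hn1 j p, mul_zero]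
  have h2 : (∑ k : Fin n, ∑ p : Fin n, 1 / ((n : ℝ) - 2) * D.TRic x i p * D.W x j k k p) = 0 := by
    rw [Finset.sum_comm]
    refine Finset.sum_eq_zero fun p _ => ?_
    rw [← Finset.mul_sum, D.trW23 x hn2 hn1 j p, mul_zero]
  have h3 : (∑ k : Fin n, ∑ l : Fin n, 1 / ((n : ℝ) - 2) * D.TRic x k l * D.W x j k i l)
      = 1 / ((n : ℝ) - 2) * ∑ k : Fin n, ∑ l : Fin n, D.W x i k j l * D.TRic x k l := by
    rw [← D.wt_swap x i j, Finset.mul_sum]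
    refine Finset.sum_congr rfl fun k _ => ?_
    rw [Finset.mul_sum]
    exact Finset.sum_congr rfl fun l _ => by ring
  have h4 : (∑ k : Fin n, ∑ l : Fin n, 1 / ((n : ℝ) - 2) * D.TRic x k l * D.W x j k l i)
      = -(1 / ((n : ℝ) - 2) * ∑ k : Fin n, ∑ l : Fin n, D.W x i k j l * D.TRic x k l) := by
    rw [← D.wt_swap x i j, Finset.mul_sum, ← Finset.sum_neg_distrib]
    refine Finset.sum_congr rfl fun k _ => ?_
    rw [Finset.mul_sum, ← Finset.sum_neg_distrib]
    refine Finset.sum_congr rfl fun l _ => ?_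
    rw [D.w_antisymm₂ x j k i l]
    ring
  have h5 : (∑ k : Fin n, D.R x / ((n : ℝ) * (n : ℝ) - (n : ℝ)) * D.W x j k i k) = 0 := by
    rw [← Finset.mul_sum, D.trW24 x hn2 hn1 j i, mul_zero]
  have h6 : (∑ k : Fin n, D.R x / ((n : ℝ) * (n : ℝ) - (n : ℝ)) * D.W x j k k i) = 0 := by
    rw [← Finset.mul_sum, D.trW23 x hn2 hn1 j i, mul_zero]
  rw [h1, h2, h3, h4, h5, h6]
  ring

end GeomData
namespace GeomData

variable {n : ℕ} {M : Type} (D : GeomData n M) (x : M)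

set_option maxHeartbeats 2000000 in
lemma crossEE (hn0 : (n : ℝ) ≠ 0) (hn1 : ((n : ℝ) - 1) ≠ 0) (hn2 : ((n : ℝ) - 2) ≠ 0)
    (i j : Fin n) :
    ∑ k : Fin n, ∑ p : Fin n, ∑ q : Fin n,
      ((1 / ((n : ℝ) - 2)) * (D.TRic x i p * kdelta k q - D.TRic x i q * kdelta k p
          + D.TRic x k q * kdelta i p - D.TRic x k p * kdelta i q)
        + D.R x / ((n : ℝ) * ((n : ℝ) - 1)) *
            (kdelta i p * kdelta k q - kdelta i q * kdelta k p)) *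
      ((1 / ((n : ℝ) - 2)) * (D.TRic x j p * kdelta k q - D.TRic x j q * kdelta k p
          + D.TRic x k q * kdelta j p - D.TRic x k p * kdelta j q)
        + D.R x / ((n : ℝ) * ((n : ℝ) - 1)) *
            (kdelta j p * kdelta k q - kdelta j q * kdelta k p))
    = 2 * ((n : ℝ) - 4) / ((n : ℝ) - 2) ^ 2 * (∑ k : Fin n, D.TRic x i k * D.TRic x j k)
      + 2 / ((n : ℝ) - 2) ^ 2 * D.normSqTRic x * kdelta i j
      + 4 / ((n : ℝ) * ((n : ℝ) - 1)) * D.R x * D.TRic x i j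
      + 2 / ((n : ℝ) ^ 2 * ((n : ℝ) - 1)) * (D.R x) ^ 2 * kdelta i j := by
  simp only [add_mul, sub_mul, mul_sub, mul_add, mul_kdelta_right', kdelta_mul_left',
    mul_ite, ite_mul, mul_zero, zero_mul, mul_one, one_mul, Finset.sum_add_distrib,
    Finset.sum_sub_distrib, Finset.sum_ite_irrel, Finset.sum_const_zero, Finset.sum_ite_eq,
    Finset.sum_ite_eq', Finset.mem_univ, if_true]
  have f2 : ∀ c d : ℝ, (∑ k : Fin n, c * D.TRic x k k * d) = 0 := fun c d => by
    have : ∀ k : Fin n, c * D.TRic x k k * d = c * d * D.TRic x k k := fun k => by ring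
    simp only [this]
    rw [← Finset.mul_sum, D.sum_tric_diag x hn0, mul_zero]
  have f6 : ∀ c d : ℝ, (∑ k : Fin n, c * (d * D.TRic x k k)) = 0 := fun c d => by
    have : ∀ k : Fin n, c * (d * D.TRic x k k) = c * d * D.TRic x k k := fun k => by ring
    simp only [this]
    rw [← Finset.mul_sum, D.sum_tric_diag x hn0, mul_zero]
  have f1 : (∑ k : Fin n, 1 / ((n : ℝ) - 2) * D.TRic x i k * (1 / ((n : ℝ) - 2) * D.TRic x j k))
      = (1 / ((n : ℝ) - 2)) ^ 2 * ∑ k : Fin n, D.TRic x i k * D.TRic x j k := by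
    rw [Finset.mul_sum]
    exact Finset.sum_congr rfl fun k _ => by ring
  have f5 : (∑ k : Fin n, 1 / ((n : ℝ) - 2) * D.TRic x k j * (1 / ((n : ℝ) - 2) * D.TRic x k i))
      = (1 / ((n : ℝ) - 2)) ^ 2 * ∑ k : Fin n, D.TRic x i k * D.TRic x j k := by
    rw [Finset.mul_sum]
    refine Finset.sum_congr rfl fun k _ => ?_
    rw [D.tric_symm x k j, D.tric_symm x k i]
    ring
  have f4 : (∑ k : Fin n, ∑ l : Fin n,
        1 / ((n : ℝ) - 2) * D.TRic x k l * (1 / ((n : ℝ) - 2) * D.TRic x k l))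
      = (1 / ((n : ℝ) - 2)) ^ 2 * D.normSqTRic x := by
    unfold normSqTRic
    rw [Finset.mul_sum]
    refine Finset.sum_congr rfl fun k _ => ?_
    rw [Finset.mul_sum]
    exact Finset.sum_congr rfl fun l _ => by ring
  have hsym : D.TRic x j i = D.TRic x i j := D.tric_symm x j i
  simp only [f1, f2, f4, f5, f6, hsym, Finset.sum_const, Finset.card_univ, Fintype.card_fin,
    nsmul_eq_mul]
  have hd1 : ((n : ℝ) * (n : ℝ) - (n : ℝ)) ≠ 0 := by
    rw [show ((n : ℝ) * n - n) = (n : ℝ) * ((n : ℝ) - 1) by ring]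
    exact mul_ne_zero hn0 hn1
  have hd2 : ((n : ℝ) ^ 2 * (n : ℝ) - (n : ℝ) ^ 2) ≠ 0 := by
    rw [show ((n : ℝ) ^ 2 * n - (n : ℝ) ^ 2) = (n : ℝ) ^ 2 * ((n : ℝ) - 1) by ring]
    exact mul_ne_zero (pow_ne_zero 2 hn0) hn1
  by_cases hij : i = j
  · subst hij
    simp only [eq_self_iff_true, if_true]
    field_simp [hd1, hd2]
    ring
  · simp only [hij, if_false]
    field_simp [hd1, hd2]
    ring

end GeomData
namespace GeomData

variable {n : ℕ} {M : Type} (D : GeomData n M) (x : M)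

set_option maxHeartbeats 2000000 in
lemma rmrm_decomp (hn0 : (n : ℝ) ≠ 0) (hn1 : ((n : ℝ) - 1) ≠ 0) (hn2 : ((n : ℝ) - 2) ≠ 0)
    (i j : Fin n) :
    ∑ k : Fin n, ∑ p : Fin n, ∑ q : Fin n, D.Rm x i k p q * D.Rm x j k p q
      = (∑ k : Fin n, ∑ p : Fin n, ∑ q : Fin n, D.W x i k p q * D.W x j k p q)
        + 4 / ((n : ℝ) - 2) * (∑ k : Fin n, ∑ l : Fin n, D.W x i k j l * D.TRic x k l)
        + 2 * ((n : ℝ) - 4) / ((n : ℝ) - 2) ^ 2 * (∑ k : Fin n, D.TRic x i k * D.TRic x j k)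
        + 2 / ((n : ℝ) - 2) ^ 2 * D.normSqTRic x * kdelta i j
        + 4 / ((n : ℝ) * ((n : ℝ) - 1)) * D.R x * D.TRic x i j
        + 2 / ((n : ℝ) ^ 2 * ((n : ℝ) - 1)) * (D.R x) ^ 2 * kdelta i j := by
  have key : ∀ k p q : Fin n, D.Rm x i k p q * D.Rm x j k p q
      = D.W x i k p q * D.W x j k p q
        + D.W x i k p q *
          ((1 / ((n : ℝ) - 2)) * (D.TRic x j p * kdelta k q - D.TRic x j q * kdelta k p
              + D.TRic x k q * kdelta j p - D.TRic x k p * kdelta j q)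
            + D.R x / ((n : ℝ) * ((n : ℝ) - 1)) *
                (kdelta j p * kdelta k q - kdelta j q * kdelta k p))
        + ((1 / ((n : ℝ) - 2)) * (D.TRic x i p * kdelta k q - D.TRic x i q * kdelta k p
              + D.TRic x k q * kdelta i p - D.TRic x k p * kdelta i q)
            + D.R x / ((n : ℝ) * ((n : ℝ) - 1)) *
                (kdelta i p * kdelta k q - kdelta i q * kdelta k p)) * D.W x j k p q
        + ((1 / ((n : ℝ) - 2)) * (D.TRic x i p * kdelta k q - D.TRic x i q * kdelta k p
              + D.TRic x k q * kdelta i p - D.TRic x k p * kdelta i q)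
            + D.R x / ((n : ℝ) * ((n : ℝ) - 1)) *
                (kdelta i p * kdelta k q - kdelta i q * kdelta k p)) *
          ((1 / ((n : ℝ) - 2)) * (D.TRic x j p * kdelta k q - D.TRic x j q * kdelta k p
              + D.TRic x k q * kdelta j p - D.TRic x k p * kdelta j q)
            + D.R x / ((n : ℝ) * ((n : ℝ) - 1)) *
                (kdelta j p * kdelta k q - kdelta j q * kdelta k p)) := by
    intro k p q
    rw [D.rm_decomp x hn0 hn1 hn2 i k p q, D.rm_decomp x hn0 hn1 hn2 j k p q]
    ring
  simp only [key, Finset.sum_add_distrib]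
  rw [D.crossWE x hn0 hn1 hn2 i j, D.crossEW x hn0 hn1 hn2 i j, D.crossEE x hn0 hn1 hn2 i j]
  ring

end GeomData
namespace GeomData

variable {n : ℕ} {M : Type} (D : GeomData n M) (x : M)

set_option maxHeartbeats 2000000 in
lemma normSqRm_decomp (hn0 : (n : ℝ) ≠ 0) (hn1 : ((n : ℝ) - 1) ≠ 0) (hn2 : ((n : ℝ) - 2) ≠ 0) :
    D.normSqRm x = D.normSqW x + 4 / ((n : ℝ) - 2) * D.normSqTRic x
      + 2 / ((n : ℝ) * ((n : ℝ) - 1)) * (D.R x) ^ 2 := by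
  have hWT0 : (∑ i : Fin n, ∑ k : Fin n, ∑ l : Fin n, D.W x i k i l * D.TRic x k l) = 0 := by
    rw [Finset.sum_comm]
    refine Finset.sum_eq_zero fun k _ => ?_
    rw [Finset.sum_comm]
    refine Finset.sum_eq_zero fun l _ => ?_
    rw [← Finset.sum_mul, D.trW13 x hn2 hn1 k l, zero_mul]
  have hdiag : ∀ i : Fin n, (kdelta i i : ℝ) = 1 := fun i => by simp [kdelta]
  have step : (∑ i : Fin n, ∑ k : Fin n, ∑ p : Fin n, ∑ q : Fin n, D.Rm x i k p q * D.Rm x i k p q)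
      = (∑ i : Fin n, ∑ k : Fin n, ∑ p : Fin n, ∑ q : Fin n, D.W x i k p q * D.W x i k p q)
        + 4 / ((n : ℝ) - 2) *
            (∑ i : Fin n, ∑ k : Fin n, ∑ l : Fin n, D.W x i k i l * D.TRic x k l)
        + 2 * ((n : ℝ) - 4) / ((n : ℝ) - 2) ^ 2 *
            (∑ i : Fin n, ∑ k : Fin n, D.TRic x i k * D.TRic x i k)
        + 2 / ((n : ℝ) - 2) ^ 2 * D.normSqTRic x * (n : ℝ)
        + 4 / ((n : ℝ) * ((n : ℝ) - 1)) * D.R x * (∑ i : Fin n, D.TRic x i i)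
        + 2 / ((n : ℝ) ^ 2 * ((n : ℝ) - 1)) * (D.R x) ^ 2 * (n : ℝ) := by
    have hpt : ∀ i : Fin n, (∑ k : Fin n, ∑ p : Fin n, ∑ q : Fin n, D.Rm x i k p q * D.Rm x i k p q)
        = (∑ k : Fin n, ∑ p : Fin n, ∑ q : Fin n, D.W x i k p q * D.W x i k p q)
          + 4 / ((n : ℝ) - 2) * (∑ k : Fin n, ∑ l : Fin n, D.W x i k i l * D.TRic x k l)
          + 2 * ((n : ℝ) - 4) / ((n : ℝ) - 2) ^ 2 * (∑ k : Fin n, D.TRic x i k * D.TRic x i k)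
          + 2 / ((n : ℝ) - 2) ^ 2 * D.normSqTRic x
          + 4 / ((n : ℝ) * ((n : ℝ) - 1)) * D.R x * D.TRic x i i
          + 2 / ((n : ℝ) ^ 2 * ((n : ℝ) - 1)) * (D.R x) ^ 2 := fun i => by
      rw [D.rmrm_decomp x hn0 hn1 hn2 i i, hdiag i]
      ring
    simp only [hpt, Finset.sum_add_distrib, ← Finset.mul_sum, Finset.sum_const,
      Finset.card_univ, Fintype.card_fin, nsmul_eq_mul]
    ring
  have hRm : D.normSqRm x = ∑ i : Fin n, ∑ k : Fin n, ∑ p : Fin n, ∑ q : Fin n,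
      D.Rm x i k p q * D.Rm x i k p q := by
    unfold normSqRm
    exact Finset.sum_congr rfl fun i _ => Finset.sum_congr rfl fun k _ =>
      Finset.sum_congr rfl fun p _ => Finset.sum_congr rfl fun q _ => sq (D.Rm x i k p q) ▸ by ring
  have hW : (∑ i : Fin n, ∑ k : Fin n, ∑ p : Fin n, ∑ q : Fin n, D.W x i k p q * D.W x i k p q)
      = D.normSqW x := by
    unfold normSqW
    exact Finset.sum_congr rfl fun i _ => Finset.sum_congr rfl fun k _ =>
      Finset.sum_congr rfl fun p _ => Finset.sum_congr rfl fun q _ => by ring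
  have hT : (∑ i : Fin n, ∑ k : Fin n, D.TRic x i k * D.TRic x i k) = D.normSqTRic x := by
    unfold normSqTRic
    exact Finset.sum_congr rfl fun i _ => Finset.sum_congr rfl fun k _ => by ring
  rw [hRm, step, hWT0, hW, hT, D.sum_tric_diag x hn0]
  field_simp
  ring

end GeomData
set_option maxHeartbeats 2000000 in
theorem stmt19 {n : ℕ} (hn : 3 ≤ n) {M : Type} [TopologicalSpace M] [MeasurableSpace M]
    [CompactSpace M] (μ : MeasureTheory.Measure M) [MeasureTheory.IsProbabilityMeasure μ]
    (D : GeomData n M) (t s : ℝ)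
    (hcrit : D.IsCritical μ t s) :
    ∀ x i j, (1 + 4 * s) * D.lapTRic x i j =
      (1 + 2 * t + 2 * s) * (D.hessR x i j - 1 / ((n : ℝ)) * D.lapR x * kdelta i j)
      - (2 * (((n : ℝ)) - 2) + 4 * ((n : ℝ)) * s) / (((n : ℝ)) - 2) *
          (∑ k : Fin n, ∑ l : Fin n, D.W x i k j l * D.TRic x k l)
      - 2 * s * (∑ k : Fin n, ∑ p : Fin n, ∑ q : Fin n, D.W x i k p q * D.W x j k p q)
      + (-((4 * s * (((n : ℝ)) ^ 2 - 3 * ((n : ℝ)) + 4) + 4 * (((n : ℝ)) - 2)) / (((n : ℝ)) * (((n : ℝ)) - 2) ^ 2))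
            * D.normSqTRic x
          + 2 * s / ((n : ℝ)) * D.normSqW x) * kdelta i j
      + (4 * s * (((n : ℝ)) ^ 2 - 3 * ((n : ℝ)) + 4) + 4 * (((n : ℝ)) - 2)) / (((n : ℝ)) - 2) ^ 2 *
          (∑ k : Fin n, D.TRic x i k * D.TRic x j k)
      + (4 - 2 * ((n : ℝ)) - 2 * ((n : ℝ)) * (((n : ℝ)) - 1) * t + 4 * (((n : ℝ)) - 2) * s) / (((n : ℝ)) * (((n : ℝ)) - 1))
          * D.R x * D.TRic x i j := by
  obtain ⟨h1, -⟩ := hcrit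
  have hn' : (3 : ℝ) ≤ (n : ℝ) := by exact_mod_cast hn
  have hn0 : (n : ℝ) ≠ 0 := by linarith
  have hn1 : ((n : ℝ) - 1) ≠ 0 := by linarith
  have hn2 : ((n : ℝ) - 2) ≠ 0 := by linarith
  intro x i j
  rw [h1 x i j, D.rmT_decomp x hn0 hn1 hn2 i j, D.rmrm_decomp x hn0 hn1 hn2 i j,
    D.normSqRm_decomp x hn0 hn1 hn2]
  field_simp
  ring
end
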